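/- arXiv:math/0304078 — 8 statements merged into one kernel-verified Lean document; each statement's English description precedes it below -/
import Mathlib

section
/- Let V be a faithful finite-dimensional complex representation of a finite group G of dimension n, with G ⊆ U(n). Then fix_G(V) ≤ f (i.e., every nonidentity element of G has eigenspace for eigenvalue 1 of dimension at most f) if and only if the induced action of G on the homogeneous space U(n)/U(n-f-1) is free. -/
open scoped Matrix


/-- The subgroup `U(k) ⊆ U(n)` of unitary matrices of block form `diag(A, I_{n-k})`,
described as a subset of the unitary group. -/
def blockSet (n k : ℕ) : Set (Matrix.unitaryGroup (Fin n) ℂ) :=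
  {U | ∀ i j : Fin n, (k ≤ (i : ℕ) ∨ k ≤ (j : ℕ)) →
    (U : Matrix (Fin n) (Fin n) ℂ) i j = if i = j then 1 else 0}

/-- For a finite subgroup `G ⊆ U(n)` (a faithful `n`-dimensional unitary
representation), `fix_G(V) ≤ f`, i.e. every nonidentity element of `G` has eigenspace
for eigenvalue `1` of dimension at most `f`, if and only if the left-multiplication
action of `G` on the coset space `U(n)/U(n-f-1)` is free (no nonidentity element of `G`
is conjugate into `U(n-f-1)`). -/
theorem fixity_le_iff_free_action (n f : ℕ) (hf : f + 1 ≤ n)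
    (G : Subgroup (Matrix.unitaryGroup (Fin n) ℂ)) [Finite G] :
    (∀ g ∈ G, g ≠ 1 →
      Module.finrank ℂ
        (Module.End.eigenspace
          (Matrix.toLin' (g : Matrix (Fin n) (Fin n) ℂ)) 1) ≤ f) ↔
    (∀ h ∈ G, h ≠ 1 → ∀ g : Matrix.unitaryGroup (Fin n) ℂ,
      g⁻¹ * h * g ∉ blockSet n (n - f - 1)) := by
  set k := n - f - 1 with hk
  have hkn : k + (f + 1) = n := by omega
  constructor
  · intro hfix h hG hne g hmem
    have hle := hfix h hG hne
    set M := g⁻¹ * h * g with hMdef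
    have hidx : ∀ t : Fin (f + 1), k + (t : ℕ) < n := fun t => by
      have := t.2; omega
    set idx : Fin (f + 1) → Fin n := fun t => ⟨k + t, hidx t⟩ with hidxdef
    have idx_inj : Function.Injective idx := fun a b hab => by
      have h1 : k + (a : ℕ) = k + (b : ℕ) := congrArg Fin.val hab
      exact Fin.ext (by omega)
    set e : Fin (f + 1) → (Fin n → ℂ) := fun t => Pi.single (idx t) 1 with he
    have he_li : LinearIndependent ℂ e := by
      have : e = (Pi.basisFun ℂ (Fin n)) ∘ idx := by
        funext t; simp [he]
      rw [this]
      exact (Pi.basisFun ℂ (Fin n)).linearIndependent.comp idx idx_inj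
    have hMe : ∀ t, (M : Matrix (Fin n) (Fin n) ℂ) *ᵥ e t = e t := by
      intro t; funext i
      have h1 := hmem i (idx t) (Or.inr (by simp [hidxdef]))
      simp [he, h1, Pi.single_apply, eq_comm]
    set u : Fin (f + 1) → (Fin n → ℂ) :=
      fun t => (g : Matrix (Fin n) (Fin n) ℂ) *ᵥ e t with hu
    have hstarg : ∀ v : Fin n → ℂ,
        (star (g : Matrix (Fin n) (Fin n) ℂ)) *ᵥ ((g : Matrix (Fin n) (Fin n) ℂ) *ᵥ v) = v := by
      intro v
      rw [Matrix.mulVec_mulVec, Matrix.UnitaryGroup.star_mul_self, Matrix.one_mulVec]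
    have hg_inj : Function.Injective
        fun v : Fin n → ℂ => (g : Matrix (Fin n) (Fin n) ℂ) *ᵥ v := by
      intro x y hxy
      calc x = _ := (hstarg x).symm
      _ = _ := by rw [show (g : Matrix (Fin n) (Fin n) ℂ) *ᵥ x
            = (g : Matrix (Fin n) (Fin n) ℂ) *ᵥ y from hxy]
      _ = y := hstarg y
    have hu_li : LinearIndependent ℂ u := by
      have h2 := he_li.map' (Matrix.mulVecLin (g : Matrix (Fin n) (Fin n) ℂ))
        (LinearMap.ker_eq_bot.mpr hg_inj)
      exact h2
    have hu_mem : ∀ t, u t ∈ Module.End.eigenspace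
        (Matrix.toLin' (h : Matrix (Fin n) (Fin n) ℂ)) 1 := by
      intro t
      rw [Module.End.mem_eigenspace_iff, one_smul, Matrix.toLin'_apply]
      have hgrp : h * g = g * M := by
        rw [hMdef]; group
      have hgM : (h : Matrix (Fin n) (Fin n) ℂ) * (g : Matrix (Fin n) (Fin n) ℂ)
          = (g : Matrix (Fin n) (Fin n) ℂ) * (M : Matrix (Fin n) (Fin n) ℂ) := by
        have := congrArg (fun x : Matrix.unitaryGroup (Fin n) ℂ =>
          (x : Matrix (Fin n) (Fin n) ℂ)) hgrp
        simpa using this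
      show (h : Matrix (Fin n) (Fin n) ℂ) *ᵥ ((g : Matrix (Fin n) (Fin n) ℂ) *ᵥ e t)
          = (g : Matrix (Fin n) (Fin n) ℂ) *ᵥ e t
      rw [Matrix.mulVec_mulVec, hgM, ← Matrix.mulVec_mulVec, hMe]
    have hspan : Submodule.span ℂ (Set.range u) ≤
        Module.End.eigenspace (Matrix.toLin' (h : Matrix (Fin n) (Fin n) ℂ)) 1 :=
      Submodule.span_le.mpr (by rintro _ ⟨t, rfl⟩; exact hu_mem t)
    have h1 : Module.finrank ℂ (Submodule.span ℂ (Set.range u)) = f + 1 := by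
      rw [finrank_span_eq_card hu_li, Fintype.card_fin]
    have h2 := Submodule.finrank_mono hspan
    rw [h1] at h2
    omega
  · intro hfree h hG hne
    by_contra hdim
    push_neg at hdim
    -- work in Euclidean space
    set E := EuclideanSpace ℂ (Fin n) with hE
    set V : Submodule ℂ E :=
      (Module.End.eigenspace (Matrix.toLin' (h : Matrix (Fin n) (Fin n) ℂ)) 1).comap
        (WithLp.linearEquiv 2 ℂ (Fin n → ℂ)).toLinearMap with hV
    have hdV : f + 1 ≤ Module.finrank ℂ V := by
      rw [hV, Submodule.comap_equiv_eq_map_symm, LinearEquiv.finrank_map_eq]; exact hdim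
    -- orthonormal family of f+1 vectors inside V
    have hW : ∀ x : V, (h : Matrix (Fin n) (Fin n) ℂ) *ᵥ (x : E) = (x : E) := by
      intro x
      have h0 : (↑x : Fin n → ℂ) ∈ Module.End.eigenspace
          (Matrix.toLin' (h : Matrix (Fin n) (Fin n) ℂ)) 1 := x.2
      rw [Module.End.mem_eigenspace_iff, one_smul, Matrix.toLin'_apply] at h0
      exact h0
    set B := stdOrthonormalBasis ℂ V with hB
    set w : Fin (f + 1) → E :=
      fun t => (B (Fin.castLE hdV t) : E) with hw
    have hw_on : Orthonormal ℂ w := by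
      rw [orthonormal_iff_ite]
      intro i j
      have h1 := orthonormal_iff_ite.mp B.orthonormal (Fin.castLE hdV i) (Fin.castLE hdV j)
      rw [Submodule.coe_inner] at h1
      simpa [hw, Fin.castLE_inj] using h1
    have hw_mem : ∀ t, (h : Matrix (Fin n) (Fin n) ℂ) *ᵥ w t = w t := fun t => hW _
    -- extend to an orthonormal basis
    set s : Set (Fin n) := {i | k ≤ (i : ℕ)} with hs
    have hvlt : ∀ i : Fin n, k ≤ (i : ℕ) → (i : ℕ) - k < f + 1 := by
      intro i hi; have := i.2; omega
    set v : Fin n → E := fun i =>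
      if hi : k ≤ (i : ℕ) then w ⟨(i : ℕ) - k, hvlt i hi⟩ else 0 with hv
    have hv_eq : ∀ (j : Fin n) (hj : k ≤ (j : ℕ)),
        v j = w ⟨(j : ℕ) - k, hvlt j hj⟩ := fun j hj => dif_pos hj
    have hres : Orthonormal ℂ (s.restrict v) := by
      have hφ : Function.Injective
          (fun i : s => (⟨(i : Fin n) - k, hvlt i i.2⟩ : Fin (f + 1))) := by
        intro a b hab
        have h1 : ((a : Fin n) : ℕ) - k = ((b : Fin n) : ℕ) - k := congrArg Fin.val hab
        have h2 : k ≤ ((a : Fin n) : ℕ) := a.2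
        have h3 : k ≤ ((b : Fin n) : ℕ) := b.2
        exact Subtype.ext (Fin.ext (by omega))
      have h4 := hw_on.comp _ hφ
      have h5 : s.restrict v = w ∘ fun i : s => (⟨(i : Fin n) - k, hvlt i i.2⟩ : Fin (f + 1)) := by
        funext i
        exact hv_eq _ i.2
      rwa [h5]
    have hcard : Module.finrank ℂ E = Fintype.card (Fin n) := finrank_euclideanSpace
    obtain ⟨b, hb⟩ := hres.exists_orthonormalBasis_extension_of_card_eq hcard
    have hb_mem : ∀ j : Fin n, k ≤ (j : ℕ) →
        (h : Matrix (Fin n) (Fin n) ℂ) *ᵥ (b j) = b j := by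
      intro j hj
      rw [hb j hj, hv_eq j hj]
      exact hw_mem _
    -- the unitary matrix with columns b j
    set gm : Matrix (Fin n) (Fin n) ℂ := Matrix.of fun i j => b j i with hgm
    have hinner : ∀ i j : Fin n, (∑ p, (starRingEnd ℂ) (b i p) * b j p)
        = if i = j then 1 else 0 := by
      intro i j
      have h1 := orthonormal_iff_ite.mp b.orthonormal i j
      rw [PiLp.inner_apply] at h1
      simpa [RCLike.inner_apply, mul_comm] using h1
    have hgmU : gm ∈ Matrix.unitaryGroup (Fin n) ℂ := by
      rw [Matrix.mem_unitaryGroup_iff']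
      ext i j
      rw [Matrix.mul_apply, Matrix.one_apply]
      simp only [hgm, Matrix.star_apply, Matrix.of_apply]
      simpa using hinner i j
    set g : Matrix.unitaryGroup (Fin n) ℂ := ⟨gm, hgmU⟩ with hgdef
    -- key computation
    have key : ∀ u : Matrix (Fin n) (Fin n) ℂ,
        (∀ j : Fin n, k ≤ (j : ℕ) → u *ᵥ (b j) = b j) →
        ∀ i j : Fin n, k ≤ (j : ℕ) →
          (star gm * u * gm) i j = if i = j then 1 else 0 := by
      intro u hu i j hj
      have hcol : ∀ p, (u * gm) p j = (u *ᵥ (b j)) p := by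
        intro p
        rw [Matrix.mul_apply, Matrix.mulVec, dotProduct]
        rfl
      rw [mul_assoc, Matrix.mul_apply]
      calc (∑ p, (star gm) i p * (u * gm) p j)
          = ∑ p, (starRingEnd ℂ) (b i p) * (b j p) := by
            apply Finset.sum_congr rfl
            intro p _
            rw [hcol, hu j hj]
            simp [hgm, Matrix.star_apply]
        _ = if i = j then 1 else 0 := hinner i j
    have hstar_mem : ∀ j : Fin n, k ≤ (j : ℕ) →
        (star (h : Matrix (Fin n) (Fin n) ℂ)) *ᵥ (b j) = b j := by
      intro j hj
      conv_lhs => rw [← hb_mem j hj]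
      rw [Matrix.mulVec_mulVec, Matrix.UnitaryGroup.star_mul_self, Matrix.one_mulVec]
    have hblock : g⁻¹ * h * g ∈ blockSet n k := by
      intro i j hij
      have hcoe : ((g⁻¹ * h * g : Matrix.unitaryGroup (Fin n) ℂ) : Matrix (Fin n) (Fin n) ℂ)
          = star gm * (h : Matrix (Fin n) (Fin n) ℂ) * gm := by
        simp [hgdef]
      rw [hcoe]
      rcases hij with hi | hj
      · by_cases hj : k ≤ (j : ℕ)
        · exact key _ hb_mem i j hj
        · have hstarM : star (star gm * (h : Matrix (Fin n) (Fin n) ℂ) * gm)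
              = star gm * star (h : Matrix (Fin n) (Fin n) ℂ) * gm := by
            simp [star_mul, mul_assoc]
          have h6 : (star gm * star (h : Matrix (Fin n) (Fin n) ℂ) * gm) j i
              = if j = i then 1 else 0 := key _ hstar_mem j i hi
          have h7 : (star gm * (h : Matrix (Fin n) (Fin n) ℂ) * gm) i j
              = (starRingEnd ℂ) ((star gm * star (h : Matrix (Fin n) (Fin n) ℂ) * gm) j i) := by
            rw [← hstarM, Matrix.star_apply]
            simp
          rw [h7, h6]
          have : i ≠ j := by
            intro hcon; rw [hcon] at hi; omega
          simp [this, Ne.symm this]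
      · exact key _ hb_mem i j hj
    exact hfree h hG hne g hblock
end

section
/- Suppose G ⊆ U(n) is a finite group such that the action of G on U(n)/U(n-f-1) is free. Then every isotropy subgroup of the G-action on U(n)/U(n-f) acts freely on the sphere S^{2(n-f)-1}, and hence has rank at most one (every abelian subgroup is cyclic). -/
open Finset Matrix

set_option maxHeartbeats 1000000

private lemma exists_prime_pair {M : Type*} [CommGroup M] [Finite M] (hnc : ¬ IsCyclic M) :
    ∃ (p : ℕ) (a b : M), p.Prime ∧ orderOf a = p ∧ orderOf b = p ∧ b ∉ Subgroup.zpowers a := by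
  classical
  have hee : Monoid.ExponentExists M := Monoid.ExponentExists.of_finite
  obtain ⟨g0, hg0⟩ := Monoid.exists_orderOf_eq_exponent hee
  set e := Monoid.exponent M with he
  have he0 : e ≠ 0 := Monoid.exponent_ne_zero_of_finite
  have hZtop : Subgroup.zpowers g0 ≠ ⊤ := by
    intro htop
    exact hnc ⟨⟨g0, fun z => show z ∈ Subgroup.zpowers g0 by rw [htop]; exact Subgroup.mem_top z⟩⟩
  obtain ⟨x, hx⟩ : ∃ x : M, x ∉ Subgroup.zpowers g0 := by
    by_contra hcon
    push_neg at hcon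
    exact hZtop ((Subgroup.eq_top_iff' _).mpr hcon)
  have hP : ∃ k, 0 < k ∧ x ^ k ∈ Subgroup.zpowers g0 :=
    ⟨e, Nat.pos_of_ne_zero he0, by rw [Monoid.pow_exponent_eq_one]; exact one_mem _⟩
  set d := Nat.find hP with hd_def
  obtain ⟨hd_pos, hd_mem⟩ := Nat.find_spec hP
  rw [← hd_def] at hd_pos hd_mem
  have hd1 : d ≠ 1 := by
    intro h1
    rw [h1, pow_one] at hd_mem
    exact hx hd_mem
  obtain ⟨p, hp, hpd⟩ := Nat.exists_prime_and_dvd hd1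
  haveI := Fact.mk hp
  set y := x ^ (d / p) with hy_def
  have hdp_pos : 0 < d / p := Nat.div_pos (Nat.le_of_dvd hd_pos hpd) hp.pos
  have hy : y ∉ Subgroup.zpowers g0 := by
    intro hmem
    exact Nat.find_min hP (Nat.div_lt_self hd_pos hp.one_lt) ⟨hdp_pos, hmem⟩
  have hyp : y ^ p ∈ Subgroup.zpowers g0 := by
    rw [hy_def, ← pow_mul, Nat.div_mul_cancel hpd]
    exact hd_mem
  have hy1 : y ≠ 1 := fun h => hy (h ▸ one_mem _)
  have hpy : p ∣ orderOf y := by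
    by_contra hndvd
    have hcop : p.Coprime (orderOf y) := (Nat.Prime.coprime_iff_not_dvd hp).mpr hndvd
    obtain ⟨mm, hmm⟩ := exists_pow_eq_self_of_coprime hcop
    exact hy (hmm ▸ pow_mem hyp mm)
  have hpe : p ∣ e := hpy.trans (Monoid.order_dvd_exponent y)
  set q := e / p with hq_def
  have hpq : p * q = e := Nat.mul_div_cancel' hpe
  have hq0 : q ≠ 0 := by
    intro h0
    rw [h0, Nat.mul_zero] at hpq
    exact he0 hpq.symm
  -- y ^ p is a natural power of g0
  have hfin : IsOfFinOrder g0 := hee.isOfFinOrder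
  obtain ⟨k, hk⟩ : ∃ k : ℕ, g0 ^ k = y ^ p := by
    have := hfin.mem_powers_iff_mem_zpowers.mpr hyp
    exact this
  have hkq : g0 ^ (k * q) = 1 := by
    rw [pow_mul, hk, ← pow_mul, hpq, Monoid.pow_exponent_eq_one]
  have hek : e ∣ k * q := by
    rw [← hg0]
    exact orderOf_dvd_of_pow_eq_one hkq
  have hpk : p ∣ k := by
    rw [← hpq] at hek
    exact (mul_dvd_mul_iff_right hq0).mp hek
  obtain ⟨t, ht⟩ := hpk
  set b := y * (g0 ^ t)⁻¹ with hb_def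
  have h1 : (g0 ^ t) ^ p = y ^ p := by
    rw [← pow_mul, mul_comm t p, ← ht, hk]
  have hbp : b ^ p = 1 := by
    have : b ^ p = y ^ p * ((g0 ^ t) ^ p)⁻¹ := by rw [hb_def, mul_pow, inv_pow]
    rw [this, h1]
    group
  have hbZ : b ∉ Subgroup.zpowers g0 := by
    intro hmem
    have : y ∈ Subgroup.zpowers g0 := by
      have hyb : y = b * g0 ^ t := by rw [hb_def]; group
      rw [hyb]
      exact mul_mem hmem (pow_mem (Subgroup.mem_zpowers g0) t)
    exact hy this
  have hb1 : b ≠ 1 := fun h => hbZ (h ▸ one_mem _)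
  have hob : orderOf b = p := orderOf_eq_prime hbp hb1
  set a := g0 ^ q with ha_def
  have hoa : orderOf a = p := by
    rw [ha_def, hq_def, ← hg0]
    exact orderOf_pow_orderOf_div (by rw [hg0]; exact he0) (by rw [hg0]; exact hpe)
  refine ⟨p, a, b, hp, hoa, hob, ?_⟩
  intro hmem
  have haZ : a ∈ Subgroup.zpowers g0 := pow_mem (Subgroup.mem_zpowers g0) q
  exact hbZ (Subgroup.zpowers_le.mpr haZ hmem)


private lemma freeRep_isCyclic {m : ℕ} (hm : 0 < m) {M : Type*} [CommGroup M] [Finite M]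
    (ρ : M →* Matrix (Fin m) (Fin m) ℂ)
    (hfree : ∀ x : M, x ≠ 1 → ∀ v : Fin m → ℂ, ρ x *ᵥ v = v → v = 0) : IsCyclic M := by
  classical
  by_contra hnc
  obtain ⟨p, a, b, hp, ha, hb, hab⟩ := exists_prime_pair hnc
  haveI := Fact.mk hp
  haveI : NeZero p := ⟨hp.ne_zero⟩
  -- Step 1: for x ≠ 1, ρ x - 1 is invertible
  have hunit : ∀ x : M, x ≠ 1 → IsUnit (ρ x - 1) := by
    intro x hx
    rw [Matrix.isUnit_iff_isUnit_det, isUnit_iff_ne_zero]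
    intro hdet
    obtain ⟨v, hv0, hv⟩ := (Matrix.exists_mulVec_eq_zero_iff).mpr hdet
    apply hv0
    apply hfree x hx
    rw [Matrix.sub_mulVec, Matrix.one_mulVec, sub_eq_zero] at hv
    exact hv
  -- Step 2: geometric sums vanish
  have hzero : ∀ x : M, x ≠ 1 → x ^ p = 1 → ∑ j ∈ Finset.range p, ρ (x ^ j) = 0 := by
    intro x hx hxp
    have hgeom : (∑ j ∈ Finset.range p, ρ x ^ j) * (ρ x - 1) = 0 := by
      rw [geom_sum_mul, ← map_pow, hxp, _root_.map_one, sub_self]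
    obtain ⟨u, hu⟩ := hunit x hx
    rw [← hu] at hgeom
    have h2 : (∑ j ∈ Finset.range p, ρ x ^ j) = 0 := by
      have h3 := congrArg (fun A => A * (↑u⁻¹ : Matrix (Fin m) (Fin m) ℂ)) hgeom
      simp only [zero_mul, mul_assoc, Units.mul_inv, mul_one] at h3
      exact h3
    calc ∑ j ∈ Finset.range p, ρ (x ^ j) = ∑ j ∈ Finset.range p, ρ x ^ j := by
          refine Finset.sum_congr rfl fun j _ => ?_
          rw [map_pow]
      _ = 0 := h2
  -- auxiliary: sums over range p vs ZMod p
  have hsum_zmod : ∀ F : ZMod p → Matrix (Fin m) (Fin m) ℂ,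
      ∑ c ∈ Finset.range p, F (c : ZMod p) = ∑ z : ZMod p, F z := by
    intro F
    refine Finset.sum_nbij' (fun c => (c : ZMod p)) (fun z => z.val) ?_ ?_ ?_ ?_ ?_
    · intro c _; exact Finset.mem_univ _
    · intro z _; exact Finset.mem_range.mpr (ZMod.val_lt z)
    · intro c hc; exact ZMod.val_natCast_of_lt (Finset.mem_range.mp hc)
    · intro z _; exact ZMod.natCast_rightInverse z
    · intro c _; rfl
  -- key reindexing identity
  have key : ∀ i, i ∈ Finset.range p → i ≠ 0 →
      ∑ c ∈ Finset.range p, ρ (a ^ (c * i)) = 0 := by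
    intro i hi hi0
    have hia : (i : ZMod p) ≠ 0 := by
      intro h0
      have := ZMod.val_natCast_of_lt (Finset.mem_range.mp hi)
      rw [h0, ZMod.val_zero] at this
      exact hi0 this.symm
    have hstepA : ∀ k : ℕ, ρ (a ^ k) = ρ (a ^ (k : ZMod p).val) := by
      intro k
      rw [ZMod.val_natCast, ← ha, pow_mod_orderOf]
    set F : ZMod p → Matrix (Fin m) (Fin m) ℂ := fun z => ρ (a ^ z.val) with hF
    have e1 : ∑ c ∈ Finset.range p, ρ (a ^ (c * i)) = ∑ c ∈ Finset.range p, F ((c : ZMod p) * (i : ZMod p)) := by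
      refine Finset.sum_congr rfl fun c _ => ?_
      rw [hstepA (c * i)]
      congr 2
      push_cast
      ring
    have e2 : ∑ c ∈ Finset.range p, F ((c : ZMod p) * (i : ZMod p)) = ∑ z : ZMod p, F (z * (i : ZMod p)) :=
      hsum_zmod (fun z => F (z * (i : ZMod p)))
    have e3 : ∑ z : ZMod p, F (z * (i : ZMod p)) = ∑ z : ZMod p, F z :=
      Fintype.sum_equiv (Equiv.mulRight₀ (i : ZMod p) hia) _ _ (fun z => rfl)
    have e4 : ∑ z : ZMod p, F z = ∑ c ∈ Finset.range p, F (c : ZMod p) := (hsum_zmod F).symm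
    have e5 : ∑ c ∈ Finset.range p, F (c : ZMod p) = ∑ c ∈ Finset.range p, ρ (a ^ c) :=
      Finset.sum_congr rfl fun c _ => (hstepA c).symm
    rw [e1, e2, e3, e4, e5]
    have ha1 : a ≠ 1 := by
      intro h
      rw [h, orderOf_one] at ha
      exact hp.ne_one ha.symm
    exact hzero a ha1 (by rw [← ha]; exact pow_orderOf_eq_one a)
  -- the double sum
  have hW0 : ∑ c ∈ Finset.range p, ∑ i ∈ Finset.range p, ρ ((a ^ c * b) ^ i) = 0 := by
    refine Finset.sum_eq_zero fun c _ => ?_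
    apply hzero
    · intro h1
      apply hab
      rw [mul_comm] at h1
      have hbc : b = (a ^ c)⁻¹ := eq_inv_of_mul_eq_one_left h1
      rw [hbc]
      exact inv_mem (pow_mem (Subgroup.mem_zpowers a) c)
    · have hap : a ^ p = 1 := by rw [← ha]; exact pow_orderOf_eq_one a
      have hbp : b ^ p = 1 := by rw [← hb]; exact pow_orderOf_eq_one b
      rw [mul_pow, ← pow_mul, mul_comm c p, pow_mul, hap, one_pow, one_mul, hbp]
  have hW1 : ∑ c ∈ Finset.range p, ∑ i ∈ Finset.range p, ρ ((a ^ c * b) ^ i)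
      = (p : ℕ) • (1 : Matrix (Fin m) (Fin m) ℂ) := by
    rw [Finset.sum_comm]
    have hterm : ∀ i ∈ Finset.range p, ∑ c ∈ Finset.range p, ρ ((a ^ c * b) ^ i)
        = if i = 0 then (p : ℕ) • (1 : Matrix (Fin m) (Fin m) ℂ) else 0 := by
      intro i hi
      by_cases hi0 : i = 0
      · subst hi0
        simp [Finset.sum_const, Finset.card_range]
      · rw [if_neg hi0]
        have : ∀ c, ρ ((a ^ c * b) ^ i) = ρ (a ^ (c * i)) * ρ (b ^ i) := by
          intro c
          rw [mul_pow, ← pow_mul, _root_.map_mul]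
        calc ∑ c ∈ Finset.range p, ρ ((a ^ c * b) ^ i)
            = (∑ c ∈ Finset.range p, ρ (a ^ (c * i))) * ρ (b ^ i) := by
              rw [Finset.sum_mul]
              exact Finset.sum_congr rfl fun c _ => this c
          _ = 0 := by rw [key i hi hi0, zero_mul]
    rw [Finset.sum_congr rfl hterm]
    rw [Finset.sum_ite_eq' (Finset.range p) 0 (fun _ => (p : ℕ) • (1 : Matrix (Fin m) (Fin m) ℂ))]
    rw [if_pos (Finset.mem_range.mpr hp.pos)]
  have hcontr : ((p : ℕ) : ℂ) = 0 := by
    have h0 : (p : ℕ) • (1 : Matrix (Fin m) (Fin m) ℂ) = 0 := by rw [← hW1, hW0]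
    have := congrFun (congrFun h0 ⟨0, hm⟩) ⟨0, hm⟩
    simpa [Matrix.smul_apply, Matrix.one_apply] using this
  exact hp.ne_zero (Nat.cast_eq_zero.mp hcontr)

private lemma part1 (n f : ℕ) (hf : f + 1 ≤ n)
    (G : Subgroup (Matrix.unitaryGroup (Fin n) ℂ))
    (hfree : ∀ h ∈ G, h ≠ 1 → ∀ u : Matrix.unitaryGroup (Fin n) ℂ,
      u⁻¹ * h * u ∉ blockSet n (n - f - 1)) :
    ∀ g : Matrix.unitaryGroup (Fin n) ℂ, ∀ h ∈ G, h ≠ 1 →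
      g⁻¹ * h * g ∈ blockSet n (n - f) →
      ∀ v : Fin n → ℂ, (∀ i : Fin n, n - f ≤ (i : ℕ) → v i = 0) →
        Matrix.mulVec ((g⁻¹ * h * g : Matrix.unitaryGroup (Fin n) ℂ) :
          Matrix (Fin n) (Fin n) ℂ) v = v → v = 0 := by
  classical
  intro g h hG hne hblock v hsupp hfix
  by_contra hv0
  have hnf : 0 < n - f := by omega
  have hnf1 : n - f - 1 < n := by omega
  set Mg : Matrix.unitaryGroup (Fin n) ℂ := g⁻¹ * h * g with hMgdef
  let V : EuclideanSpace ℂ (Fin n) := WithLp.toLp 2 v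
  have hV0 : V ≠ 0 := fun h0 => hv0 (by have := congrArg WithLp.ofLp h0; simpa [V] using this)
  have hnormV : ‖V‖ ≠ 0 := norm_ne_zero_iff.mpr hV0
  set c : ℂ := ((‖V‖ : ℝ) : ℂ)⁻¹ with hcdef
  set Vh : EuclideanSpace ℂ (Fin n) := c • V with hVhdef
  have hVhfun : ∀ i : Fin n, Vh i = c * v i := fun i => rfl
  have hVh1 : (inner ℂ Vh Vh : ℂ) = 1 := by
    rw [inner_self_eq_norm_sq_to_K]
    have hnorm : ‖Vh‖ = 1 := by
      have h1 : ‖Vh‖ = ‖c‖ * ‖V‖ := norm_smul c V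
      have h2 : ‖c‖ = ‖V‖⁻¹ := by
        rw [hcdef, norm_inv, Complex.norm_real, Real.norm_eq_abs,
          abs_of_nonneg (norm_nonneg V)]
      rw [h1, h2, inv_mul_cancel₀ hnormV]
    rw [hnorm]
    norm_num
  set s : Set (Fin n) := {i | n - f - 1 ≤ (i : ℕ)} with hsdef
  set w0 : Fin n → EuclideanSpace ℂ (Fin n) := fun i =>
    if (i : ℕ) = n - f - 1 then Vh else EuclideanSpace.single i 1 with hw0
  have hw0_hat : ∀ i : Fin n, (i : ℕ) = n - f - 1 → w0 i = Vh := by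
    intro i hi; rw [hw0]; dsimp only; rw [if_pos hi]
  have hw0_single : ∀ i : Fin n, (i : ℕ) ≠ n - f - 1 → w0 i = EuclideanSpace.single i 1 := by
    intro i hi; rw [hw0]; dsimp only; rw [if_neg hi]
  have hVh_supp : ∀ j : Fin n, n - f ≤ (j : ℕ) → Vh j = 0 := by
    intro j hj; rw [hVhfun, hsupp j hj, mul_zero]
  have hon : Orthonormal ℂ (s.restrict w0) := by
    rw [orthonormal_iff_ite]
    rintro ⟨i, hi⟩ ⟨j, hj⟩
    have hi' : n - f - 1 ≤ (i : ℕ) := hi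
    have hj' : n - f - 1 ≤ (j : ℕ) := hj
    show (inner ℂ (w0 i) (w0 j) : ℂ) = _
    by_cases hi1 : (i : ℕ) = n - f - 1 <;> by_cases hj1 : (j : ℕ) = n - f - 1
    · have hij : i = j := Fin.ext (by rw [hi1, hj1])
      subst hij
      rw [if_pos (Subtype.ext rfl), hw0_hat i hi1]
      exact hVh1
    · have hij : i ≠ j := fun hEq => hj1 (hEq ▸ hi1)
      rw [if_neg (fun hEq => hij (congrArg Subtype.val hEq))]
      rw [hw0_hat i hi1, hw0_single j hj1]
      rw [EuclideanSpace.inner_single_right]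
      rw [hVh_supp j (by omega), map_zero, mul_zero]
    · have hij : i ≠ j := fun hEq => hi1 (hEq ▸ hj1)
      rw [if_neg (fun hEq => hij (congrArg Subtype.val hEq))]
      rw [hw0_single i hi1, hw0_hat j hj1]
      rw [EuclideanSpace.inner_single_left]
      rw [hVh_supp i (by omega), mul_zero]
    · rw [hw0_single i hi1, hw0_single j hj1]
      rw [EuclideanSpace.inner_single_left, EuclideanSpace.single_apply, _root_.map_one, one_mul]
      by_cases hij : i = j
      · subst hij
        rw [if_pos rfl, if_pos (Subtype.ext rfl)]
      · rw [if_neg hij, if_neg (fun hEq => hij (congrArg Subtype.val hEq))]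
  obtain ⟨b, hb⟩ := hon.exists_orthonormalBasis_extension_of_card_eq finrank_euclideanSpace
  set w : Matrix (Fin n) (Fin n) ℂ := Matrix.of (fun i j => b j i) with hwdef
  have hw_apply : ∀ i j, w i j = b j i := fun i j => rfl
  have hw_mem : w ∈ Matrix.unitaryGroup (Fin n) ℂ := by
    rw [Matrix.mem_unitaryGroup_iff']
    ext i j
    have hbij := (orthonormal_iff_ite.mp b.orthonormal) i j
    rw [PiLp.inner_apply] at hbij
    simp only [RCLike.inner_apply] at hbij
    rw [Matrix.mul_apply, Matrix.one_apply]
    calc ∑ k, (star w) i k * w k j = ∑ k, (starRingEnd ℂ) (b i k) * b j k := by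
          refine Finset.sum_congr rfl fun k _ => ?_
          rw [Matrix.star_apply, hw_apply, hw_apply]
          rfl
      _ = if i = j then 1 else 0 := by
          rw [← hbij]; exact Finset.sum_congr rfl fun k _ => mul_comm _ _
  set W : Matrix.unitaryGroup (Fin n) ℂ := ⟨w, hw_mem⟩ with hWdef
  have hWcol : ∀ j : Fin n, w *ᵥ Pi.single j 1 = fun i => b j i := by
    intro j
    rw [Matrix.mulVec_single]
    funext i
    rw [MulOpposite.op_one, one_smul, Matrix.col_apply, hw_apply]
  have hWinvW : ((W⁻¹ : Matrix.unitaryGroup (Fin n) ℂ) : Matrix (Fin n) (Fin n) ℂ) * w = 1 :=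
    congrArg Subtype.val (inv_mul_cancel W)
  have hsingle_fun : ∀ j : Fin n,
      (fun i => (EuclideanSpace.single j (1:ℂ)) i) = (Pi.single j 1 : Fin n → ℂ) := by
    intro j; funext i
    rw [EuclideanSpace.single_apply, Pi.single_apply]
  have hMgcol : ∀ j : Fin n, n - f ≤ (j : ℕ) →
      (Mg : Matrix (Fin n) (Fin n) ℂ) *ᵥ Pi.single j 1 = Pi.single j 1 := by
    intro j hj
    rw [Matrix.mulVec_single]
    funext i
    rw [MulOpposite.op_one, one_smul, Matrix.col_apply, hblock i j (Or.inr hj), Pi.single_apply]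
  have hMgVh : (Mg : Matrix (Fin n) (Fin n) ℂ) *ᵥ (fun i => Vh i) = fun i => Vh i := by
    have h1 : (fun i => Vh i) = c • v := rfl
    rw [h1, Matrix.mulVec_smul, hfix]
  set N : Matrix.unitaryGroup (Fin n) ℂ := W⁻¹ * Mg * W with hNdef
  have hsplit : ∀ x : Fin n → ℂ, (N : Matrix (Fin n) (Fin n) ℂ) *ᵥ x
      = ((W⁻¹ : Matrix.unitaryGroup (Fin n) ℂ) : Matrix (Fin n) (Fin n) ℂ) *ᵥ
        ((Mg : Matrix (Fin n) (Fin n) ℂ) *ᵥ (w *ᵥ x)) := by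
    intro x
    rw [Matrix.mulVec_mulVec, Matrix.mulVec_mulVec]
    rfl
  have hNcol : ∀ j : Fin n, n - f - 1 ≤ (j : ℕ) →
      (N : Matrix (Fin n) (Fin n) ℂ) *ᵥ Pi.single j 1 = Pi.single j 1 := by
    intro j hj
    rcases Nat.lt_or_ge (j : ℕ) (n - f) with hlt | hge
    · have hjval : (j : ℕ) = n - f - 1 := by omega
      have hbVh : (fun i => b j i) = fun i => Vh i := by
        rw [hb j (show j ∈ s from hj), hw0_hat j hjval]
      rw [hsplit, hWcol j, hbVh, hMgVh, ← hbVh, ← hWcol j, Matrix.mulVec_mulVec,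
        hWinvW, Matrix.one_mulVec]
    · have hbj : (fun i => b j i) = (Pi.single j 1 : Fin n → ℂ) := by
        rw [hb j (show j ∈ s from hj), hw0_single j (by omega)]
        exact hsingle_fun j
      have hwj : w *ᵥ Pi.single j 1 = Pi.single j 1 := by rw [hWcol j, hbj]
      rw [hsplit, hwj, hMgcol j hge]
      conv_lhs => rw [← hwj, Matrix.mulVec_mulVec, hWinvW]
      rw [Matrix.one_mulVec]
  have hNentry : ∀ i j : Fin n, n - f - 1 ≤ (j : ℕ) →
      (N : Matrix (Fin n) (Fin n) ℂ) i j = if i = j then 1 else 0 := by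
    intro i j hj
    have hcf := congrFun (hNcol j hj) i
    simpa [Matrix.mulVec_single, Pi.single_apply] using hcf
  have hNstar : star (N : Matrix (Fin n) (Fin n) ℂ) * (N : Matrix (Fin n) (Fin n) ℂ) = 1 :=
    Matrix.mem_unitaryGroup_iff'.mp N.prop
  have hNrow : ∀ i j : Fin n, n - f - 1 ≤ (i : ℕ) →
      (N : Matrix (Fin n) (Fin n) ℂ) i j = if i = j then 1 else 0 := by
    intro i j hi
    have hcol : star (N : Matrix (Fin n) (Fin n) ℂ) *ᵥ Pi.single i 1 = Pi.single i 1 := by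
      conv_lhs => rw [← hNcol i hi]
      rw [Matrix.mulVec_mulVec, hNstar, Matrix.one_mulVec]
    have hcf := congrFun hcol j
    have h2 : (starRingEnd ℂ) ((N : Matrix (Fin n) (Fin n) ℂ) i j) = if j = i then 1 else 0 := by
      simpa [Matrix.mulVec_single, Matrix.star_apply, Pi.single_apply] using hcf
    have h3 := congrArg (starRingEnd ℂ) h2
    rw [Complex.conj_conj] at h3
    rw [h3, apply_ite (starRingEnd ℂ), _root_.map_one, map_zero]
    by_cases hij : i = j
    · subst hij; simp
    · rw [if_neg (fun hEq => hij hEq.symm), if_neg hij]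
  have hmem : N ∈ blockSet n (n - f - 1) := by
    intro i j hij
    rcases hij with hi | hj
    · exact hNrow i j hi
    · exact hNentry i j hj
  apply hfree h hG hne (g * W)
  have heq : (g * W)⁻¹ * h * (g * W) = N := by
    rw [hNdef, hMgdef]
    group
  rw [heq]
  exact hmem

/-- Suppose `G ⊆ U(n)` is a finite group acting freely on `U(n)/U(n-f-1)`
(no nonidentity element is conjugate into `U(n-f-1)`).  Then every isotropy subgroup of
the `G`-action on `U(n)/U(n-f)` acts freely on the sphere `S^{2(n-f)-1}` (concretely: a
nonidentity element `h` of the isotropy group at `gU(n-f)` has `g⁻¹hg ∈ U(n-f)` fixing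
no nonzero vector supported in the first `n-f` coordinates), and hence every abelian
subgroup of an isotropy subgroup is cyclic. -/
theorem isotropy_rank_one (n f : ℕ) (hf : f + 1 ≤ n)
    (G : Subgroup (Matrix.unitaryGroup (Fin n) ℂ)) [Finite G]
    (hfree : ∀ h ∈ G, h ≠ 1 → ∀ u : Matrix.unitaryGroup (Fin n) ℂ,
      u⁻¹ * h * u ∉ blockSet n (n - f - 1)) :
    (∀ g : Matrix.unitaryGroup (Fin n) ℂ, ∀ h ∈ G, h ≠ 1 →
      g⁻¹ * h * g ∈ blockSet n (n - f) →
      ∀ v : Fin n → ℂ, (∀ i : Fin n, n - f ≤ (i : ℕ) → v i = 0) →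
        Matrix.mulVec ((g⁻¹ * h * g : Matrix.unitaryGroup (Fin n) ℂ) :
          Matrix (Fin n) (Fin n) ℂ) v = v → v = 0) ∧
    (∀ g : Matrix.unitaryGroup (Fin n) ℂ,
      ∀ H : Subgroup (Matrix.unitaryGroup (Fin n) ℂ), H ≤ G →
      (∀ h ∈ H, g⁻¹ * h * g ∈ blockSet n (n - f)) →
      (∀ a ∈ H, ∀ b ∈ H, a * b = b * a) → IsCyclic H) := by
  classical
  have key := part1 n f hf G hfree
  refine ⟨key, ?_⟩
  intro g H hHG hHblock hcomm
  haveI : Finite H := Finite.of_injective (Subgroup.inclusion hHG)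
    (Subgroup.inclusion_injective hHG)
  letI cg : CommGroup H :=
    { (inferInstance : Group H) with
      mul_comm := fun a b => Subtype.ext (hcomm ↑a a.2 ↑b b.2) }
  set m := n - f with hm_def
  have hm : 0 < m := by omega
  have hle : m ≤ n := Nat.sub_le n f
  set C : H → Matrix (Fin n) (Fin n) ℂ :=
    fun x => ((g⁻¹ * ↑x * g : Matrix.unitaryGroup (Fin n) ℂ) : Matrix (Fin n) (Fin n) ℂ) with hC
  have hCblock : ∀ x : H, ∀ i j : Fin n, (m ≤ (i : ℕ) ∨ m ≤ (j : ℕ)) →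
      C x i j = if i = j then 1 else 0 := fun x i j hij => hHblock ↑x x.2 i j hij
  have hsum_restrict : ∀ F : Fin n → ℂ, (∀ k : Fin n, m ≤ (k : ℕ) → F k = 0) →
      ∑ k : Fin n, F k = ∑ k : Fin m, F (Fin.castLE hle k) := by
    intro F hF
    have h1 : ∑ k : Fin m, F (Fin.castLE hle k)
        = ∑ k ∈ Finset.univ.map (Fin.castLEEmb hle), F k :=
      (Finset.sum_map Finset.univ (Fin.castLEEmb hle) F).symm
    rw [h1]
    refine (Finset.sum_subset (Finset.subset_univ _) ?_).symm
    intro x _ hx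
    refine hF x ?_
    by_contra hxm
    push_neg at hxm
    exact hx (Finset.mem_map.mpr ⟨⟨(x : ℕ), hxm⟩, Finset.mem_univ _, Fin.ext rfl⟩)
  have hCmul : ∀ x y : H, C (x * y) = C x * C y := by
    intro x y
    have h1 : (g⁻¹ * ↑(x * y) * g : Matrix.unitaryGroup (Fin n) ℂ)
        = (g⁻¹ * ↑x * g) * (g⁻¹ * ↑y * g) := by
      rw [Subgroup.coe_mul]
      group
    rw [hC]
    dsimp only
    rw [h1]
    rfl
  have hC1 : C 1 = 1 := by
    rw [hC]; dsimp only
    have h1 : (g⁻¹ * ↑(1 : H) * g : Matrix.unitaryGroup (Fin n) ℂ) = 1 := by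
      rw [OneMemClass.coe_one, mul_one, inv_mul_cancel]
    rw [h1]
    rfl
  set φ : H → Matrix (Fin m) (Fin m) ℂ :=
    fun x => (C x).submatrix (Fin.castLE hle) (Fin.castLE hle) with hφ
  have hφ1 : φ 1 = 1 := by
    rw [hφ]; dsimp only
    rw [hC1]
    ext i j
    rw [Matrix.submatrix_apply, Matrix.one_apply, Matrix.one_apply]
    by_cases hij : i = j
    · subst hij; rw [if_pos rfl, if_pos rfl]
    · rw [if_neg (fun hEq => hij (Fin.castLE_injective hle hEq)), if_neg hij]
  have hφmul : ∀ x y : H, φ (x * y) = φ x * φ y := by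
    intro x y
    ext i j
    rw [hφ]; dsimp only
    rw [hCmul, Matrix.submatrix_apply, Matrix.mul_apply, Matrix.mul_apply]
    rw [hsum_restrict (fun k => C x (Fin.castLE hle i) k * C y k (Fin.castLE hle j)) ?_]
    · exact Finset.sum_congr rfl fun k _ => rfl
    · intro k hk
      show C x (Fin.castLE hle i) k * C y k (Fin.castLE hle j) = 0
      rw [hCblock x _ k (Or.inr hk), if_neg, zero_mul]
      intro hEq
      have hiv : ((Fin.castLE hle i : Fin n) : ℕ) = (k : ℕ) := congrArg Fin.val hEq
      have him : ((Fin.castLE hle i : Fin n) : ℕ) = (i : ℕ) := rfl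
      have := i.isLt
      omega
  have hρfree : ∀ x : H, x ≠ 1 → ∀ u : Fin m → ℂ, φ x *ᵥ u = u → u = 0 := by
    intro x hx u hu
    set v' : Fin n → ℂ := fun k => if hk : (k : ℕ) < m then u ⟨(k : ℕ), hk⟩ else 0 with hv'
    have hsupp' : ∀ i : Fin n, n - f ≤ (i : ℕ) → v' i = 0 := by
      intro i hi
      rw [hv']; dsimp only
      rw [dif_neg (by omega)]
    have hfix' : Matrix.mulVec (C x) v' = v' := by
      funext i
      have happ : (C x *ᵥ v') i = ∑ k : Fin n, C x i k * v' k := rfl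
      rw [happ]
      by_cases hi : (i : ℕ) < m
      · rw [hsum_restrict (fun k => C x i k * v' k) ?_]
        · have h2 : ∀ k : Fin m, v' (Fin.castLE hle k) = u k := by
            intro k
            rw [hv']; dsimp only
            rw [dif_pos (show ((Fin.castLE hle k : Fin n) : ℕ) < m from k.isLt)]
            exact congrArg u (Fin.ext rfl)
          calc ∑ k : Fin m, C x i (Fin.castLE hle k) * v' (Fin.castLE hle k)
              = ∑ k : Fin m, φ x ⟨(i : ℕ), hi⟩ k * u k := by
                refine Finset.sum_congr rfl fun k _ => ?_
                rw [h2 k]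
                rfl
            _ = (φ x *ᵥ u) ⟨(i : ℕ), hi⟩ := rfl
            _ = u ⟨(i : ℕ), hi⟩ := by rw [hu]
            _ = v' i := by rw [hv']; dsimp only; rw [dif_pos hi]
        · intro k hk
          have hz : v' k = 0 := by rw [hv']; dsimp only; rw [dif_neg (by omega)]
          show C x i k * v' k = 0
          rw [hz, mul_zero]
      · push_neg at hi
        calc ∑ k : Fin n, C x i k * v' k
            = ∑ k : Fin n, (if i = k then (1 : ℂ) else 0) * v' k :=
              Finset.sum_congr rfl fun k _ => by rw [hCblock x i k (Or.inl hi)]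
          _ = ∑ k : Fin n, (if i = k then v' k else 0) :=
              Finset.sum_congr rfl fun k _ => by rw [ite_mul, one_mul, zero_mul]
          _ = v' i := by rw [Finset.sum_ite_eq, if_pos (Finset.mem_univ i)]
    have hx' : (↑x : Matrix.unitaryGroup (Fin n) ℂ) ≠ 1 := fun hc => hx (Subtype.ext hc)
    have hv'0 : v' = 0 := key g ↑x (hHG x.2) hx' (hHblock ↑x x.2) v' hsupp' hfix'
    funext i
    have hz := congrFun hv'0 (Fin.castLE hle i)
    rw [hv'] at hz; dsimp only at hz
    rw [dif_pos (show ((Fin.castLE hle i : Fin n) : ℕ) < m from i.isLt)] at hz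
    exact hz
  exact freeRep_isCyclic hm ⟨⟨φ, hφ1⟩, hφmul⟩ hρfree
end

section
/- If a finite group G admits a faithful finite-dimensional complex representation V with fix_G(V) ≤ f, then the rank of G is at most f + 1; i.e., G contains no elementary abelian p-subgroup (ℤ/p)^{f+2} for any prime p. -/
/-- If a finite group `G` admits a faithful finite-dimensional complex
representation `V` with `fix_G(V) ≤ f` (every nonidentity element fixes a subspace of
dimension at most `f`), then the rank of `G` is at most `f+1`: `G` contains no
elementary abelian `p`-subgroup `(ℤ/p)^{f+2}` for any prime `p`. -/
theorem rank_le_fixity_add_one (G : Type*) [Group G] [Finite G]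
    (V : Type*) [AddCommGroup V] [Module ℂ V] [FiniteDimensional ℂ V]
    (ρ : Representation ℂ G V) (hfaithful : Function.Injective ρ) (f : ℕ)
    (hfix : ∀ g : G, g ≠ 1 →
      Module.finrank ℂ (Module.End.eigenspace (ρ g) 1) ≤ f) :
    ∀ p : ℕ, p.Prime →
      ∀ φ : Multiplicative (Fin (f + 2) → ZMod p) →* G, ¬ Function.Injective φ := by
  classical
  intro p hp φ hinj
  haveI : Fact p.Prime := ⟨hp⟩
  -- the commuting family of endomorphisms
  set T : Fin (f + 2) → Module.End ℂ V :=
    fun i => ρ (φ (Multiplicative.ofAdd (Pi.single i (1 : ZMod p)))) with hT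
  have hsingle_pow : ∀ i : Fin (f + 2),
      (Multiplicative.ofAdd (Pi.single i (1 : ZMod p) : Fin (f + 2) → ZMod p)) ^ p = 1 := by
    intro i
    rw [← ofAdd_nsmul]
    have : p • (Pi.single i (1 : ZMod p) : Fin (f + 2) → ZMod p) = 0 := by
      ext j
      by_cases h : j = i <;> simp [h, Pi.single_apply, nsmul_eq_mul, ZMod.natCast_self]
    rw [this, ofAdd_zero]
  have hTpow : ∀ i, (T i) ^ p = 1 := by
    intro i
    rw [hT]
    simp only [← map_pow, hsingle_pow, map_one]
  have hcomm : ∀ i j, Commute (T i) (T j) := by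
    intro i j
    exact ((Commute.all _ _).map φ).map ρ
  have hsemis : ∀ i, (T i).IsFinitelySemisimple := by
    intro i
    refine (Module.End.isSemisimple_of_squarefree_aeval_eq_zero
      (p := Polynomial.X ^ p - Polynomial.C 1) ?_ ?_).isFinitelySemisimple
    · exact (Polynomial.separable_X_pow_sub_C (1 : ℂ)
        (by exact_mod_cast (Nat.cast_ne_zero (R := ℂ)).mpr hp.ne_zero) one_ne_zero).squarefree
    · simp [map_sub, hTpow i]
  have hmax : ∀ i μ, (T i).maxGenEigenspace μ = (T i).eigenspace μ :=
    fun i => (hsemis i).maxGenEigenspace_eq_eigenspace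
  set W : (Fin (f + 2) → ℂ) → Submodule ℂ V :=
    fun χ => ⨅ i, (T i).eigenspace (χ i) with hWdef
  have hW_top : ⨆ χ, W χ = ⊤ := by
    have := Module.End.iSup_iInf_maxGenEigenspace_eq_top_of_iSup_maxGenEigenspace_eq_top_of_commute
      T (fun i j _ => hcomm i j) (fun i => Module.End.iSup_maxGenEigenspace_eq_top (T i))
    simpa only [hmax] using this
  have hW_indep : iSupIndep W := by
    have := Module.End.independent_iInf_maxGenEigenspace_of_forall_mapsTo T
      (fun i j μ => Module.End.mapsTo_maxGenEigenspace_of_comm (hcomm j i) μ)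
    simpa only [hmax] using this
  -- a finite family of weight spaces spans
  obtain ⟨u, hu⟩ := CompleteLattice.IsCompactElement.exists_finset_of_le_iSup _
    ((Submodule.fg_iff_compact (⊤ : Submodule ℂ V)).mp (IsNoetherian.noetherian ⊤)) W hW_top.ge
  set s : Finset (Fin (f + 2) → ℂ) := u.filter (fun χ => W χ ≠ ⊥) with hsdef
  have hs_top : (⊤ : Submodule ℂ V) ≤ ⨆ χ ∈ s, W χ := by
    refine le_trans hu (iSup₂_le fun χ hχ => ?_)
    by_cases h : W χ = ⊥
    · simp [h]
    · exact le_iSup₂ (f := fun χ _ => W χ) χ (by simp [hsdef, hχ, h])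
  have hs_ne_bot : ∀ χ ∈ s, W χ ≠ ⊥ := fun χ hχ => (Finset.mem_filter.mp hχ).2
  -- pow-apply helper
  have hpowv : ∀ (g : Module.End ℂ V) (μ : ℂ) (v : V), g v = μ • v →
      ∀ k : ℕ, (g ^ k) v = μ ^ k • v := by
    intro g μ v hgv k
    induction k with
    | zero => simp
    | succ k ih =>
      rw [pow_succ, pow_succ, Module.End.mul_apply, hgv, map_smul, ih, smul_smul, mul_comm]
  -- eigenvalues are p-th roots of unity
  have hval : ∀ χ ∈ s, ∀ i, (χ i) ^ p = 1 := by
    intro χ hχ i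
    obtain ⟨v, hv, hv0⟩ := Submodule.ne_bot_iff _ |>.mp (hs_ne_bot χ hχ)
    have hvi : T i v = χ i • v := Module.End.mem_eigenspace_iff.mp (Submodule.mem_iInf _ |>.mp hv i)
    have h1 : ((T i) ^ p) v = (χ i) ^ p • v := hpowv _ _ _ hvi p
    rw [hTpow i] at h1
    have : ((χ i) ^ p - 1) • v = 0 := by
      rw [sub_smul, one_smul, ← h1]; simp
    rcases smul_eq_zero.mp this with h | h
    · linear_combination (norm := ring_nf) h
    · exact absurd h hv0
  -- fix a primitive p-th root of unity and discrete logs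
  set ζ : ℂ := Complex.exp (2 * Real.pi * Complex.I / p) with hζdef
  have hζ : IsPrimitiveRoot ζ p := Complex.isPrimitiveRoot_exp p hp.ne_zero
  haveI : NeZero p := ⟨hp.ne_zero⟩
  have hcex : ∀ χ : Fin (f + 2) → ℂ, ∀ i, ∃ m : ℕ, χ ∈ s → ζ ^ m = χ i := by
    intro χ i
    by_cases h : χ ∈ s
    · obtain ⟨m, _, hm⟩ := hζ.eq_pow_of_pow_eq_one (hval χ h i)
      exact ⟨m, fun _ => hm⟩
    · exact ⟨0, fun h' => absurd h' h⟩
  choose c hc using hcex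
  -- key computation: common kernel elements act trivially on weight spaces
  have hkey : ∀ χ ∈ s, ∀ a : Fin (f + 2) → ZMod p,
      (∑ i, (c χ i : ZMod p) * a i) = 0 →
      W χ ≤ Module.End.eigenspace (ρ (φ (Multiplicative.ofAdd a))) 1 := by
    intro χ hχ a ha v hv
    rw [Module.End.mem_eigenspace_iff, one_smul]
    have hsingle : ∀ i : Fin (f + 2),
        (Pi.single i (a i) : Fin (f + 2) → ZMod p) =
          (a i).val • (Pi.single i (1 : ZMod p) : Fin (f + 2) → ZMod p) := by
      intro i
      ext j
      by_cases h : j = i <;> simp [h, Pi.single_apply, nsmul_eq_mul, ZMod.natCast_val]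
    have hTi : ∀ i : Fin (f + 2),
        ρ (φ (Multiplicative.ofAdd (Pi.single i (a i)))) = (T i) ^ (a i).val := by
      intro i
      rw [hsingle i, ofAdd_nsmul, map_pow, map_pow, hT]
    have hprod : ∀ t : Finset (Fin (f + 2)),
        ρ (φ (Multiplicative.ofAdd (∑ i ∈ t, Pi.single i (a i)))) v =
          (∏ i ∈ t, (χ i) ^ (a i).val) • v := by
      intro t
      induction t using Finset.induction_on with
      | empty => simp
      | insert _ _ hj ih =>
        rename_i j t
        rw [Finset.sum_insert hj, Finset.prod_insert hj, ofAdd_add, map_mul, map_mul,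
          Module.End.mul_apply, ih, map_smul, hTi j,
          hpowv (T j) (χ j) v
            (Module.End.mem_eigenspace_iff.mp (Submodule.mem_iInf _ |>.mp hv j)) _,
          smul_smul, mul_comm]
    have hfinal := hprod Finset.univ
    rw [Finset.univ_sum_single a] at hfinal
    rw [hfinal]
    have hχpow : (∏ i, (χ i) ^ (a i).val) = ζ ^ (∑ i, c χ i * (a i).val) := by
      rw [← Finset.prod_pow_eq_pow_sum]
      exact Finset.prod_congr rfl fun i _ => by rw [← hc χ i hχ, ← pow_mul]
    have hdvd : p ∣ ∑ i, c χ i * (a i).val := by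
      rw [← ZMod.natCast_eq_zero_iff]
      push_cast
      simpa [ZMod.natCast_val, ZMod.cast_id] using ha
    rw [hχpow, (hζ.pow_eq_one_iff_dvd _).mpr hdvd, one_smul]
  -- common kernel elements exist for small finsets
  have hker : ∀ t : Finset (Fin (f + 2) → ℂ), t.card ≤ f + 1 →
      ∃ a : Fin (f + 2) → ZMod p, a ≠ 0 ∧ ∀ χ ∈ t, ∑ i, (c χ i : ZMod p) * a i = 0 := by
    intro t ht
    set L : (Fin (f + 2) → ZMod p) →ₗ[ZMod p] (↥t → ZMod p) :=
      LinearMap.pi (fun χ => ∑ i, (c (χ : Fin (f + 2) → ℂ) i : ZMod p) • LinearMap.proj i) with hL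
    have hnotinj : ¬ Function.Injective L := by
      intro h
      have h1 := LinearMap.finrank_le_finrank_of_injective h
      rw [Module.finrank_pi, Module.finrank_pi, Fintype.card_fin, Fintype.card_coe] at h1
      omega
    have : ∃ a : Fin (f + 2) → ZMod p, a ≠ 0 ∧ L a = 0 := by
      by_contra h
      push_neg at h
      refine hnotinj (LinearMap.ker_eq_bot.mp ((Submodule.eq_bot_iff _).mpr fun a ha => ?_))
      by_contra h0
      exact h a h0 ha
    obtain ⟨a, ha0, haL⟩ := this
    refine ⟨a, ha0, fun χ hχ => ?_⟩
    have := congrFun haL ⟨χ, hχ⟩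
    simpa [hL, LinearMap.pi_apply, LinearMap.sum_apply, LinearMap.smul_apply,
      LinearMap.proj_apply, smul_eq_mul] using this
  have hg_ne : ∀ a : Fin (f + 2) → ZMod p, a ≠ 0 → φ (Multiplicative.ofAdd a) ≠ 1 := by
    intro a ha h
    apply ha
    have := hinj (h.trans (map_one φ).symm)
    simpa using this
  by_cases hcard : s.card ≤ f + 1
  · -- few weights: some nontrivial element acts as the identity
    obtain ⟨a, ha0, haker⟩ := hker s hcard
    have htop : (⊤ : Submodule ℂ V) ≤
        Module.End.eigenspace (ρ (φ (Multiplicative.ofAdd a))) 1 :=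
      le_trans hs_top (iSup₂_le fun χ hχ => hkey χ hχ a (haker χ hχ))
    have hone : ρ (φ (Multiplicative.ofAdd a)) = ρ 1 := by
      rw [map_one]
      ext v
      have := Module.End.mem_eigenspace_iff.mp (htop (Submodule.mem_top (x := v)))
      simpa using this
    exact hg_ne a ha0 (hfaithful hone)
  · -- many weights: some nontrivial element fixes a large subspace
    push_neg at hcard
    obtain ⟨s', hs'sub, hs'card⟩ := Finset.exists_subset_card_eq hcard.le
    obtain ⟨a, ha0, haker⟩ := hker s' (le_of_eq hs'card)
    set E := Module.End.eigenspace (ρ (φ (Multiplicative.ofAdd a))) 1 with hE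
    have hWE : ∀ χ ∈ s', W χ ≤ E :=
      fun χ hχ => hkey χ (hs'sub hχ) a (haker χ hχ)
    have hvex : ∀ χ : ↥s', ∃ v : V, v ∈ W ↑χ ∧ v ≠ 0 := by
      intro χ
      obtain ⟨v, hv, hv0⟩ := Submodule.ne_bot_iff _ |>.mp (hs_ne_bot χ (hs'sub χ.2))
      exact ⟨v, hv, hv0⟩
    choose v hv1 hv2 using hvex
    have hli : LinearIndependent ℂ v :=
      (hW_indep.comp Subtype.val_injective).linearIndependent _ hv1 hv2
    set w : ↥s' → ↥E := fun χ => ⟨v χ, hWE ↑χ χ.2 (hv1 χ)⟩ with hw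
    have hliw : LinearIndependent ℂ w := by
      apply LinearIndependent.of_comp E.subtype
      exact hli
    have hcardle := hliw.fintype_card_le_finrank
    rw [Fintype.card_coe, hs'card] at hcardle
    have := hfix _ (hg_ne a ha0)
    rw [← hE] at this
    omega
end

section
/- Let E = (ℤ/p)^r be an elementary abelian p-group acting faithfully on a finite-dimensional complex vector space V of dimension n. Then some nonidentity element g ∈ E satisfies dim_ℂ V^⟨g⟩ ≥ n·(p^{r-1} - 1)/(p^r - 1). -/
open Module LinearMap Representation Finset

namespace ElemAbAux

noncomputable section

variable {G V : Type*} [Group G] [Fintype G] [AddCommGroup V] [Module ℂ V]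
  [FiniteDimensional ℂ V]

lemma card_mul_finrank_invariants (ρ : Representation ℂ G V) :
    (Fintype.card G : ℂ) * (finrank ℂ ρ.invariants : ℂ) =
      ∑ g : G, trace ℂ V (ρ g) := by
  haveI : Invertible (Fintype.card G : ℂ) :=
    invertibleOfNonzero (Nat.cast_ne_zero.mpr Fintype.card_ne_zero)
  have h : ⅟ (Fintype.card G : ℂ) • ∑ g : G, trace ℂ V (ρ g)
      = (finrank ℂ ρ.invariants : ℂ) := by
    rw [← (isProj_averageMap ρ).trace]
    simp [GroupAlgebra.average, _root_.map_sum]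
  rw [← h, smul_eq_mul, ← mul_assoc, mul_invOf_self, one_mul]

variable {p r : ℕ}

/-- scaling an element of `(ℤ/p)^r` by `c`. -/
def mulE (c : ZMod p) (g : Multiplicative (Fin r → ZMod p)) :
    Multiplicative (Fin r → ZMod p) :=
  Multiplicative.ofAdd fun i => c * Multiplicative.toAdd g i

lemma toAdd_mulE (c : ZMod p) (g : Multiplicative (Fin r → ZMod p)) :
    Multiplicative.toAdd (mulE c g) = fun i => c * Multiplicative.toAdd g i := rfl

/-- the powers-of-`g` homomorphism `ℤ/p → (ℤ/p)^r`. -/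
def scaleHom (g : Multiplicative (Fin r → ZMod p)) :
    Multiplicative (ZMod p) →* Multiplicative (Fin r → ZMod p) :=
  MonoidHom.mk' (fun c => mulE (Multiplicative.toAdd c) g) (by
    intro a b
    apply Multiplicative.toAdd.injective
    funext i
    simp [toAdd_mulE, add_mul])

lemma mulE_bijective [Fact p.Prime] {c : ZMod p} (hc : c ≠ 0) :
    Function.Bijective (fun g : Multiplicative (Fin r → ZMod p) => mulE c g) := by
  apply Function.bijective_iff_has_inverse.mpr
  refine ⟨fun g => mulE c⁻¹ g, fun g => ?_, fun g => ?_⟩ <;>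
  · apply Multiplicative.toAdd.injective
    funext i
    simp [toAdd_mulE, inv_mul_cancel_left₀ hc, mul_inv_cancel_left₀ hc]

lemma scaleHom_pow [NeZero p] (g : Multiplicative (Fin r → ZMod p))
    (c : Multiplicative (ZMod p)) :
    scaleHom g c = g ^ (Multiplicative.toAdd c).val := by
  apply Multiplicative.toAdd.injective
  funext i
  show (Multiplicative.toAdd c) * Multiplicative.toAdd g i = _
  rw [toAdd_pow]
  show _ = (Multiplicative.toAdd c).val • Multiplicative.toAdd g i
  rw [nsmul_eq_mul, ZMod.natCast_rightInverse (Multiplicative.toAdd c)]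

lemma invariants_scale [Fact p.Prime] (ρ : Representation ℂ (Multiplicative (Fin r → ZMod p)) V)
    (g : Multiplicative (Fin r → ZMod p)) :
    Representation.invariants (k := ℂ) (G := Multiplicative (ZMod p)) (ρ.comp (scaleHom g))
      = Module.End.eigenspace (ρ g) 1 := by
  ext v
  rw [mem_invariants, Module.End.mem_eigenspace_iff, one_smul]
  constructor
  · intro h
    have h1 := h (Multiplicative.ofAdd (1 : ZMod p))
    have hg : scaleHom g (Multiplicative.ofAdd (1 : ZMod p)) = g := by
      apply Multiplicative.toAdd.injective
      funext i
      simp [scaleHom, toAdd_mulE]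
    rwa [show (ρ.comp (scaleHom g)) (Multiplicative.ofAdd (1 : ZMod p))
        = ρ (scaleHom g (Multiplicative.ofAdd (1 : ZMod p))) from rfl, hg] at h1
  · intro h c
    have hpow : ∀ m : ℕ, ((ρ g) ^ m) v = v := by
      intro m
      induction m with
      | zero => simp
      | succ m ih => rw [pow_succ, Module.End.mul_apply, h, ih]
    rw [show (ρ.comp (scaleHom g)) c = ρ (scaleHom g c) from rfl, scaleHom_pow, map_pow]
    exact hpow _

end

end ElemAbAux

open ElemAbAux in
/-- Let `E = (ℤ/p)^r` (with `r ≥ 1`, `p` prime) act faithfully on a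
finite-dimensional complex vector space `V` of dimension `n`.  Then some nonidentity
element `g ∈ E` satisfies `dim_ℂ V^⟨g⟩ ≥ n·(p^{r-1} - 1)/(p^r - 1)`, i.e.
`n·(p^{r-1} - 1) ≤ (dim_ℂ V^⟨g⟩)·(p^r - 1)`. -/
theorem elementary_abelian_large_fixed_subspace (p r n : ℕ) (hp : p.Prime) (hr : 1 ≤ r)
    (V : Type*) [AddCommGroup V] [Module ℂ V] [FiniteDimensional ℂ V]
    (hn : Module.finrank ℂ V = n)
    (ρ : Representation ℂ (Multiplicative (Fin r → ZMod p)) V)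
    (hfaithful : Function.Injective ρ) :
    ∃ g : Multiplicative (Fin r → ZMod p), g ≠ 1 ∧
      n * (p ^ (r - 1) - 1) ≤
        Module.finrank ℂ (Module.End.eigenspace (ρ g) 1) * (p ^ r - 1) := by
  classical
  haveI : Fact p.Prime := ⟨hp⟩
  have hcardE : Fintype.card (Multiplicative (Fin r → ZMod p)) = p ^ r := by
    simp [Fintype.card_fun, ZMod.card]
  have hcardH : Fintype.card (Multiplicative (ZMod p)) = p := by
    simp [ZMod.card]
  set d : Multiplicative (Fin r → ZMod p) → ℕ := fun g =>
    finrank ℂ (Representation.invariants (k := ℂ) (G := Multiplicative (ZMod p))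
      (ρ.comp (scaleHom g))) with hd
  set D : ℕ := finrank ℂ ρ.invariants with hD
  set S : ℕ := ∑ g, d g with hS
  -- the trace formula for each g
  have hdg : ∀ g, ((p : ℂ)) * d g =
      ∑ c : Multiplicative (ZMod p),
        trace ℂ V (ρ (mulE (Multiplicative.toAdd c) g)) := by
    intro g
    have h := card_mul_finrank_invariants (ρ.comp (scaleHom g))
    rw [hcardH] at h
    exact h
  -- value of columns
  have hF1 : ∑ g, trace ℂ V
      (ρ (mulE (Multiplicative.toAdd (1 : Multiplicative (ZMod p))) g))
      = ((p ^ r * n : ℕ) : ℂ) := by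
    have hone : ∀ g : Multiplicative (Fin r → ZMod p),
        mulE (Multiplicative.toAdd (1 : Multiplicative (ZMod p))) g = 1 := by
      intro g
      apply Multiplicative.toAdd.injective
      funext i
      simp [toAdd_mulE]
    have : ∀ g : Multiplicative (Fin r → ZMod p),
        trace ℂ V (ρ (mulE (Multiplicative.toAdd (1 : Multiplicative (ZMod p))) g))
          = (n : ℂ) := by
      intro g
      rw [hone g, map_one, trace_one, hn]
    rw [Finset.sum_congr rfl fun g _ => this g, Finset.sum_const, Finset.card_univ, hcardE]
    push_cast
    ring
  have hFc : ∀ c : Multiplicative (ZMod p), c ≠ 1 →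
      ∑ g, trace ℂ V (ρ (mulE (Multiplicative.toAdd c) g)) = ((p ^ r * D : ℕ) : ℂ) := by
    intro c hc
    have hc0 : Multiplicative.toAdd c ≠ 0 := by
      intro h0
      exact hc (Multiplicative.toAdd.injective (by simpa using h0))
    have hbij := mulE_bijective (p := p) (r := r) hc0
    have hcomp := Function.Bijective.sum_comp hbij (fun e => trace ℂ V (ρ e))
    rw [show (∑ g, trace ℂ V (ρ (mulE (Multiplicative.toAdd c) g)))
        = ∑ e, trace ℂ V (ρ e) from hcomp]
    rw [← card_mul_finrank_invariants ρ, hcardE, ← hD]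
    push_cast
    ring
  -- the key identity
  have key : (p : ℂ) * (S : ℂ)
      = ((p ^ r * n : ℕ) : ℂ) + ((p - 1 : ℕ) : ℂ) * ((p ^ r * D : ℕ) : ℂ) := by
    have h1 : (p : ℂ) * (S : ℂ) = ∑ g, ((p : ℂ) * d g) := by
      rw [hS]
      push_cast
      rw [Finset.mul_sum]
    rw [h1, Finset.sum_congr rfl fun g _ => hdg g, Finset.sum_comm]
    rw [← Finset.add_sum_erase _ _ (Finset.mem_univ (1 : Multiplicative (ZMod p))), hF1]
    congr 1
    rw [Finset.sum_congr rfl fun c hc => hFc c (Finset.ne_of_mem_erase hc),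
      Finset.sum_const, Finset.card_erase_of_mem (Finset.mem_univ _), Finset.card_univ, hcardH]
    rw [nsmul_eq_mul]
  have keyN : p * S = p ^ r * n + (p - 1) * (p ^ r * D) := by
    exact_mod_cast key
  have hSlow : p ^ (r - 1) * n ≤ S := by
    have h1 : p * (p ^ (r - 1) * n) ≤ p * S := by
      rw [keyN, ← mul_assoc, ← pow_succ', Nat.sub_add_cancel hr]
      exact Nat.le_add_right _ _
    exact Nat.le_of_mul_le_mul_left h1 hp.pos
  have hd1 : d 1 = n := by
    have htop : Representation.invariants (k := ℂ) (G := Multiplicative (ZMod p))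
        (ρ.comp (scaleHom (1 : Multiplicative (Fin r → ZMod p)))) = ⊤ := by
      rw [eq_top_iff]
      intro v _
      rw [mem_invariants]
      intro c
      have h1 : scaleHom (1 : Multiplicative (Fin r → ZMod p)) c = 1 := by
        apply Multiplicative.toAdd.injective
        funext i
        simp [scaleHom, toAdd_mulE]
      show ρ (scaleHom 1 c) v = v
      rw [h1, map_one]
      rfl
    show finrank ℂ (Representation.invariants (k := ℂ) (G := Multiplicative (ZMod p))
        (ρ.comp (scaleHom (1 : Multiplicative (Fin r → ZMod p))))) = n
    rw [htop, finrank_top, hn]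
  have hsplit : d 1 + ∑ g ∈ Finset.univ.erase 1, d g = S :=
    Finset.add_sum_erase _ _ (Finset.mem_univ 1)
  have hpr1 : 1 ≤ p ^ (r - 1) := Nat.one_le_pow _ _ hp.pos
  have hlow : n * (p ^ (r - 1) - 1) ≤ ∑ g ∈ Finset.univ.erase 1, d g := by
    have h2 : n * p ^ (r - 1) ≤ n + ∑ g ∈ Finset.univ.erase 1, d g := by
      rw [hd1] at hsplit
      rw [hsplit, Nat.mul_comm]
      exact hSlow
    have h3 : n * (p ^ (r - 1) - 1) + n = n * p ^ (r - 1) := by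
      calc n * (p ^ (r - 1) - 1) + n = n * ((p ^ (r - 1) - 1) + 1) := by ring
        _ = n * p ^ (r - 1) := by rw [Nat.sub_add_cancel hpr1]
    omega
  have hne : (Finset.univ.erase (1 : Multiplicative (Fin r → ZMod p))).Nonempty := by
    rw [← Finset.card_pos, Finset.card_erase_of_mem (Finset.mem_univ _), Finset.card_univ,
      hcardE]
    have h2 : 2 ≤ p ^ r := le_trans hp.two_le (by
      calc p = p ^ 1 := (pow_one p).symm
        _ ≤ p ^ r := Nat.pow_le_pow_right hp.pos hr)
    omega
  obtain ⟨g, hg, hmax⟩ := Finset.exists_max_image _ d hne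
  refine ⟨g, Finset.ne_of_mem_erase hg, ?_⟩
  have hsum : ∑ x ∈ Finset.univ.erase 1, d x ≤ (p ^ r - 1) * d g := by
    have := Finset.sum_le_card_nsmul _ d (d g) fun x hx => hmax x hx
    rwa [Finset.card_erase_of_mem (Finset.mem_univ _), Finset.card_univ, hcardE,
      smul_eq_mul] at this
  have heig : d g = finrank ℂ (Module.End.eigenspace (ρ g) 1) := by
    show finrank ℂ (Representation.invariants (k := ℂ) (G := Multiplicative (ZMod p))
        (ρ.comp (scaleHom g))) = _
    rw [invariants_scale]
  calc n * (p ^ (r - 1) - 1) ≤ ∑ x ∈ Finset.univ.erase 1, d x := hlow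
    _ ≤ (p ^ r - 1) * d g := hsum
    _ = finrank ℂ (Module.End.eigenspace (ρ g) 1) * (p ^ r - 1) := by
        rw [heig, Nat.mul_comm]
end

section
/- Every metacyclic p-group P (an extension 1 → ℤ/p^t → P → ℤ/p^s → 1 with cyclic kernel and quotient) acts freely on a product of two spheres S^{2p^s - 1} × S^1, via a product of a linear action on S^{2p^s-1} and a linear action on S^1. -/
open Complex

/-- A faithful unimodular character of `ZMod n`. -/
lemma exists_faithful_char (n : ℕ) (hn : n ≠ 0) :
    ∃ φ : Multiplicative (ZMod n) →* ℂ,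
      (∀ x, ‖φ x‖ = 1) ∧ (∀ x, φ x = 1 → x = 1) := by
  haveI : NeZero n := ⟨hn⟩
  set ζ : ℂ := Complex.exp (2 * Real.pi * I / n) with hζdef
  have hζ : IsPrimitiveRoot ζ n := Complex.isPrimitiveRoot_exp n hn
  have hζ1 : ζ ^ n = 1 := hζ.pow_eq_one
  have habs : ‖ζ‖ = 1 := by
    rw [hζdef]
    have : (2 * Real.pi * I / n) = ((2 * Real.pi / n : ℝ) : ℂ) * I := by
      push_cast; ring
    rw [this, Complex.norm_exp_ofReal_mul_I]
  refine ⟨{ toFun := fun x => ζ ^ (Multiplicative.toAdd x).val,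
            map_one' := by simp
            map_mul' := by
              intro x y
              show ζ ^ (Multiplicative.toAdd x + Multiplicative.toAdd y).val
                  = ζ ^ (Multiplicative.toAdd x).val * ζ ^ (Multiplicative.toAdd y).val
              rw [ZMod.val_add, ← pow_eq_pow_mod _ hζ1, pow_add] }, ?_, ?_⟩
  · intro x
    show ‖ζ ^ (Multiplicative.toAdd x).val‖ = 1
    rw [norm_pow, habs, one_pow]
  · intro x hx
    have hd : n ∣ (Multiplicative.toAdd x).val := (hζ.pow_eq_one_iff_dvd _).mp hx
    have hlt : (Multiplicative.toAdd x).val < n := ZMod.val_lt _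
    have h0 : (Multiplicative.toAdd x).val = 0 := Nat.eq_zero_of_dvd_of_lt hd hlt
    have : Multiplicative.toAdd x = 0 := (ZMod.val_eq_zero _).mp h0
    exact Multiplicative.toAdd.injective (by simpa using this)
section IndRep

variable {P : Type*} [Group P] {B : Subgroup P} [B.Normal] {n : ℕ}

omit [B.Normal] in
private lemma chi_congr (χ : B →* ℂ) {x y : P} (hx : x ∈ B) (hy : y ∈ B) (h : x = y) :
    χ ⟨x, hx⟩ = χ ⟨y, hy⟩ := by subst h; rfl

open scoped Classical in
/-- The monomial matrix of the induced representation `Ind_B^P χ`. -/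
noncomputable def indMat (e : P ⧸ B ≃ Fin n) (χ : B →* ℂ) (g : P) :
    Matrix (Fin n) (Fin n) ℂ :=
  Matrix.of fun i j =>
    if h : g • e.symm j = e.symm i then
      χ ⟨((e.symm i).out)⁻¹ * g * (e.symm j).out, by
        rw [← QuotientGroup.eq_one_iff]
        have h1 : QuotientGroup.mk ((e.symm i).out) = e.symm i := QuotientGroup.out_eq' _
        have h2 : QuotientGroup.mk (g * (e.symm j).out) = g • e.symm j := by
          have h3 := MulAction.Quotient.smul_mk B g (e.symm j).out
          rw [QuotientGroup.out_eq'] at h3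
          simpa [smul_eq_mul] using h3.symm
        calc (QuotientGroup.mk (((e.symm i).out)⁻¹ * g * (e.symm j).out) : P ⧸ B)
            = (QuotientGroup.mk ((e.symm i).out))⁻¹ *
              QuotientGroup.mk (g * (e.symm j).out) := by
              rw [← QuotientGroup.mk_inv, ← QuotientGroup.mk_mul]; congr 1; group
          _ = 1 := by rw [h1, h2, h, inv_mul_cancel]⟩
    else 0

theorem indMat_mul (e : P ⧸ B ≃ Fin n) (χ : B →* ℂ) (g h : P) :
    indMat e χ (g * h) = indMat e χ g * indMat e χ h := by
  classical
  ext i k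
  rw [Matrix.mul_apply]
  rw [Finset.sum_eq_single (e (h • e.symm k))]
  · have hj : e.symm (e (h • e.symm k)) = h • e.symm k := e.symm_apply_apply _
    show indMat e χ (g * h) i k
        = indMat e χ g i (e (h • e.symm k)) * indMat e χ h (e (h • e.symm k)) k
    unfold indMat
    simp only [Matrix.of_apply, hj]
    by_cases hc : (g * h) • e.symm k = e.symm i
    · rw [dif_pos hc, dif_pos (show g • (h • e.symm k) = e.symm i by
        rw [← mul_smul]; exact hc), dif_pos trivial, ← map_mul]
      exact chi_congr χ _ _ (by group)
    · rw [dif_neg hc, dif_neg (show ¬ g • (h • e.symm k) = e.symm i by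
        rw [← mul_smul]; exact hc), zero_mul]
  · intro j _ hjne
    have hno : ¬ (h • e.symm k = e.symm j) := by
      intro hh
      exact hjne (by rw [hh, Equiv.apply_symm_apply])
    show indMat e χ g i j * indMat e χ h j k = 0
    unfold indMat
    simp only [Matrix.of_apply]
    rw [dif_neg hno, mul_zero]
  · intro hmem
    exact absurd (Finset.mem_univ _) hmem

theorem indMat_one (e : P ⧸ B ≃ Fin n) (χ : B →* ℂ) : indMat e χ 1 = 1 := by
  classical
  ext i j
  unfold indMat
  simp only [Matrix.of_apply, one_smul]
  by_cases hij : j = i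
  · subst hij
    rw [dif_pos rfl, Matrix.one_apply_eq]
    rw [chi_congr χ _ (one_mem B) (by group)]
    exact map_one χ
  · rw [dif_neg (fun hc => hij (e.symm.injective hc)),
      Matrix.one_apply_ne (fun h => hij h.symm)]

theorem indMat_star (e : P ⧸ B ≃ Fin n) (χ : B →* ℂ) (hχ : ∀ b, ‖χ b‖ = 1) (g : P) :
    star (indMat e χ g) = indMat e χ g⁻¹ := by
  classical
  have hinv : ∀ b : B, star (χ b) = χ b⁻¹ := by
    intro b
    have h1 : χ b * star (χ b) = 1 := by
      rw [Complex.star_def, Complex.mul_conj, Complex.normSq_eq_norm_sq,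
        hχ b]
      norm_num
    have h2 : χ b * χ b⁻¹ = 1 := by rw [← map_mul, mul_inv_cancel, map_one]
    have hne : χ b ≠ 0 := fun h0 => by simp [h0] at h1
    exact mul_left_cancel₀ hne (h1.trans h2.symm)
  ext i j
  rw [Matrix.star_apply]
  unfold indMat
  simp only [Matrix.of_apply]
  by_cases hc : g • e.symm i = e.symm j
  · have hc' : g⁻¹ • e.symm j = e.symm i := by rw [← hc, inv_smul_smul]
    rw [dif_pos hc, dif_pos hc', hinv]
    refine chi_congr χ ?_ ?_ (by group)
  · have hc' : ¬ (g⁻¹ • e.symm j = e.symm i) := by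
      intro hh; exact hc (by rw [← hh, smul_inv_smul])
    rw [dif_neg hc, dif_neg hc', star_zero]

theorem indMat_mem (e : P ⧸ B ≃ Fin n) (χ : B →* ℂ) (hχ : ∀ b, ‖χ b‖ = 1) (g : P) :
    indMat e χ g ∈ Matrix.unitaryGroup (Fin n) ℂ := by
  rw [Matrix.mem_unitaryGroup_iff]
  rw [indMat_star e χ hχ, ← indMat_mul, mul_inv_cancel, indMat_one]

end IndRep
/-- Every metacyclic `p`-group `P` (an extension
`1 → ℤ/p^t → P → ℤ/p^s → 1` with cyclic kernel and quotient) acts freely on the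
product of two spheres `S^{2p^s-1} × S^1`, via a product of linear (unitary) actions:
a `p^s`-dimensional unitary representation on the unit sphere of `ℂ^{p^s}` together
with a one-dimensional unitary representation on the unit circle in `ℂ`. -/
theorem metacyclic_free_action_product_spheres (p t s : ℕ) (hp : p.Prime)
    (P : Type*) [Group P] [Finite P] (B : Subgroup P) [B.Normal]
    (hB : Nonempty (B ≃* Multiplicative (ZMod (p ^ t))))
    (hQ : Nonempty ((P ⧸ B) ≃* Multiplicative (ZMod (p ^ s)))) :
    ∃ (ρ₁ : P →* Matrix.unitaryGroup (Fin (p ^ s)) ℂ)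
      (ρ₂ : P →* Matrix.unitaryGroup (Fin 1) ℂ),
      ∀ g : P, g ≠ 1 → ∀ (v : Fin (p ^ s) → ℂ) (w : ℂ),
        ‖(EuclideanSpace.equiv (Fin (p ^ s)) ℂ).symm v‖ = 1 → ‖w‖ = 1 →
        ¬ (Matrix.mulVec ((ρ₁ g : Matrix.unitaryGroup (Fin (p ^ s)) ℂ) :
              Matrix (Fin (p ^ s)) (Fin (p ^ s)) ℂ) v = v ∧
           ((ρ₂ g : Matrix.unitaryGroup (Fin 1) ℂ) : Matrix (Fin 1) (Fin 1) ℂ) 0 0 * w = w) := by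
  classical
  obtain ⟨eB⟩ := hB
  obtain ⟨eQ⟩ := hQ
  have hps : (p ^ s) ≠ 0 := pow_ne_zero _ hp.pos.ne'
  have hpt : (p ^ t) ≠ 0 := pow_ne_zero _ hp.pos.ne'
  haveI : NeZero (p ^ s) := ⟨hps⟩
  haveI : NeZero (p ^ t) := ⟨hpt⟩
  obtain ⟨φt, hφtnorm, hφtinj⟩ := exists_faithful_char (p ^ t) hpt
  obtain ⟨φs, hφsnorm, hφsinj⟩ := exists_faithful_char (p ^ s) hps
  set χ : B →* ℂ := φt.comp eB.toMonoidHom with hχdef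
  have hχnorm : ∀ b, ‖χ b‖ = 1 := fun b => hφtnorm _
  have hχinj : ∀ b : B, χ b = 1 → b = 1 := by
    intro b hb
    have h1 : eB b = 1 := hφtinj _ hb
    exact eB.injective (h1.trans (map_one eB).symm)
  haveI : Fintype (P ⧸ B) := Fintype.ofFinite _
  have hcard : Fintype.card (P ⧸ B) = p ^ s := by
    rw [Fintype.card_congr eQ.toEquiv, Fintype.card_congr Multiplicative.toAdd, ZMod.card]
  set e : P ⧸ B ≃ Fin (p ^ s) := Fintype.equivFinOfCardEq hcard with hedef
  set ψ : P →* ℂ := φs.comp (eQ.toMonoidHom.comp (QuotientGroup.mk' B)) with hψdef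
  have hψnorm : ∀ g, ‖ψ g‖ = 1 := fun g => hφsnorm _
  have hψmem : ∀ g : P, Matrix.diagonal (fun _ : Fin 1 => ψ g) ∈
      Matrix.unitaryGroup (Fin 1) ℂ := by
    intro g
    rw [Matrix.mem_unitaryGroup_iff, Matrix.star_eq_conjTranspose,
      Matrix.diagonal_conjTranspose, Matrix.diagonal_mul_diagonal]
    have hz : ψ g * star (ψ g) = 1 := by
      rw [Complex.star_def, Complex.mul_conj, Complex.normSq_eq_norm_sq,
        hψnorm g]
      norm_num
    have h4 : (fun i : Fin 1 => ψ g * star (fun _ : Fin 1 => ψ g) i) = (fun _ : Fin 1 => (1 : ℂ)) := by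
      funext i; simpa using hz
    rw [h4]
    exact Matrix.diagonal_one
  refine ⟨{ toFun := fun g => ⟨indMat e χ g, indMat_mem e χ hχnorm g⟩,
            map_one' := Subtype.ext (indMat_one e χ),
            map_mul' := fun g h => Subtype.ext (indMat_mul e χ g h) },
          { toFun := fun g => ⟨Matrix.diagonal (fun _ => ψ g), hψmem g⟩,
            map_one' := Subtype.ext (by simp),
            map_mul' := fun g h => Subtype.ext (by
              simp only [map_mul]
              rw [← Matrix.diagonal_mul_diagonal]
              rfl) },
          ?_⟩
  rintro g hg v w hv hw ⟨h1, h2⟩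
  simp only [MonoidHom.coe_mk, OneHom.coe_mk] at h1 h2
  by_cases hgB : g ∈ B
  · -- the induced representation is fixed-point free on B
    have hfix : ∀ q : P ⧸ B, g • q = q := by
      intro q
      induction q using QuotientGroup.induction_on with
      | H x =>
        show g • (QuotientGroup.mk x : P ⧸ B) = QuotientGroup.mk x
        rw [MulAction.Quotient.smul_mk, smul_eq_mul, QuotientGroup.eq]
        simpa [mul_assoc] using ‹B.Normal›.conj_mem _ (inv_mem hgB) x⁻¹
    have hdiag : ∀ i j : Fin (p ^ s), j ≠ i → indMat e χ g i j = 0 := by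
      intro i j hj
      unfold indMat
      simp only [Matrix.of_apply]
      rw [dif_neg]
      intro hc
      rw [hfix] at hc
      exact hj (e.symm.injective hc)
    have hv0 : ∀ i, v i = 0 := by
      intro i
      have hmem : ((e.symm i).out)⁻¹ * g * ((e.symm i).out) ∈ B := by
        simpa [mul_assoc] using ‹B.Normal›.conj_mem _ hgB ((e.symm i).out)⁻¹
      have hentry : indMat e χ g i i = χ ⟨((e.symm i).out)⁻¹ * g * ((e.symm i).out), hmem⟩ := by
        unfold indMat
        simp only [Matrix.of_apply]
        rw [dif_pos (hfix _)]
      have hmv : Matrix.mulVec (indMat e χ g) v i = indMat e χ g i i * v i := by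
        show ∑ j, indMat e χ g i j * v j = indMat e χ g i i * v i
        exact Finset.sum_eq_single i (fun j _ hj => by rw [hdiag i j hj, zero_mul])
          (fun h => absurd (Finset.mem_univ _) h)
      have heq : indMat e χ g i i * v i = v i := by
        rw [← hmv]; exact congrFun h1 i
      have hbne : (⟨((e.symm i).out)⁻¹ * g * ((e.symm i).out), hmem⟩ : B) ≠ 1 := by
        intro hb
        have hgval : ((e.symm i).out)⁻¹ * g * ((e.symm i).out) = 1 :=
          congrArg Subtype.val hb
        apply hg
        have h3 : g = (e.symm i).out * (((e.symm i).out)⁻¹ * g * ((e.symm i).out)) *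
            ((e.symm i).out)⁻¹ := by group
        rw [hgval] at h3
        simpa using h3
      have hχne : indMat e χ g i i ≠ 1 := by
        rw [hentry]
        exact fun h => hbne (hχinj _ h)
      have hz : (indMat e χ g i i - 1) * v i = 0 := by
        rw [sub_mul, one_mul, heq, sub_self]
      rcases mul_eq_zero.mp hz with h | h
      · exact absurd (sub_eq_zero.mp h) hχne
      · exact h
    have hv00 : v = 0 := funext hv0
    rw [hv00] at hv
    simp at hv
  · -- the character of the quotient moves w
    have hq1 : (QuotientGroup.mk g : P ⧸ B) ≠ 1 := by
      rwa [Ne, QuotientGroup.eq_one_iff]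
    have hψne : ψ g ≠ 1 := by
      intro h
      have h1' : eQ (QuotientGroup.mk g) = 1 := hφsinj _ h
      exact hq1 (eQ.injective (h1'.trans (map_one eQ).symm))
    have hw0 : w ≠ 0 := by
      intro h; rw [h, norm_zero] at hw; exact zero_ne_one hw
    rw [Matrix.diagonal_apply_eq] at h2
    exact hψne (mul_right_cancel₀ hw0 (h2.trans (one_mul w).symm))
end

section
/- For r coprime to the order q of a finite group G, the ℤG-module P_r = ker(ℤG → ℤ/r) (augmentation followed by reduction mod r) is projective. -/
variable (G : Type*) [Group G]

/-- The augmentation `ℤG → ℤ`. -/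
noncomputable def aug : MonoidAlgebra ℤ G →ₐ[ℤ] ℤ :=
  MonoidAlgebra.lift ℤ ℤ G 1

/-- The `ℤG`-submodule `P_r = ker(ℤG → ℤ/r)` of the group ring, the kernel of the
augmentation followed by reduction mod `r`; concretely the elements whose augmentation
is divisible by `r`. -/
noncomputable def swanModule (r : ℤ) :
    Submodule (MonoidAlgebra ℤ G) (MonoidAlgebra ℤ G) where
  carrier := {x | r ∣ aug G x}
  add_mem' := by
    intro a b ha hb
    simpa [map_add] using dvd_add ha hb
  zero_mem' := by simp
  smul_mem' := by
    intro c x hx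
    simpa [smul_eq_mul, map_mul] using Dvd.dvd.mul_left hx (aug G c)

lemma aug_single (g : G) (b : ℤ) : aug G (MonoidAlgebra.single g b) = b := by
  simp [aug, MonoidAlgebra.lift_single]

lemma aug_of (g : G) : aug G (MonoidAlgebra.of ℤ G g) = 1 := by
  simp [MonoidAlgebra.of_apply, aug_single]

section Aux

variable [Fintype G]

/-- The norm element `∑ g, g` of the group ring. -/
noncomputable def nrm : MonoidAlgebra ℤ G := ∑ g : G, MonoidAlgebra.of ℤ G g

lemma aug_nrm : aug G (nrm G) = (Fintype.card G : ℤ) := by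
  rw [nrm, map_sum]
  simp [aug_single]

lemma mul_nrm (x : MonoidAlgebra ℤ G) : x * nrm G = aug G x • nrm G := by
  induction x using MonoidAlgebra.induction_on with
  | of g =>
      rw [aug_of, one_smul, nrm, Finset.mul_sum]
      rw [← Equiv.sum_comp (Equiv.mulLeft g) (fun h => MonoidAlgebra.of ℤ G h)]
      exact Finset.sum_congr rfl fun h _ => ((MonoidAlgebra.of ℤ G).map_mul g h).symm
  | add f g hf hg => rw [add_mul, hf, hg, map_add, add_smul]
  | smul c f hf => rw [smul_mul_assoc, hf, map_smul, smul_eq_mul, mul_smul]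

end Aux

/-- For `r` coprime to the order `q` of a finite group `G`, the
`ℤG`-module `P_r = ker(ℤG → ℤ/r)` is projective. -/
theorem swanModule_projective (G : Type*) [Group G] [Finite G] (r : ℤ)
    (hr : IsCoprime r (Nat.card G : ℤ)) :
    Module.Projective (MonoidAlgebra ℤ G) (swanModule G r) := by
  classical
  cases nonempty_fintype G
  set q : ℤ := (Nat.card G : ℤ) with hq
  have hqcard : q = (Fintype.card G : ℤ) := by rw [hq, Nat.card_eq_fintype_card]
  obtain ⟨u, v, huv⟩ := hr
  set N : MonoidAlgebra ℤ G := nrm G with hN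
  -- the two generators of the Swan module
  have hm1 : (r • (1 : MonoidAlgebra ℤ G)) ∈ swanModule G r := by
    show r ∣ aug G _
    rw [map_smul, map_one, smul_eq_mul, mul_one]
  have hm2 : (q • (1 : MonoidAlgebra ℤ G) - N) ∈ swanModule G r := by
    show r ∣ aug G _
    rw [map_sub, map_smul, map_one, hN, aug_nrm, ← hqcard, smul_eq_mul, mul_one, sub_self]
    exact dvd_zero r
  set m₁ : swanModule G r := ⟨r • (1 : MonoidAlgebra ℤ G), hm1⟩
  set m₂ : swanModule G r := ⟨q • (1 : MonoidAlgebra ℤ G) - N, hm2⟩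
  -- the retraction
  let s : (MonoidAlgebra ℤ G × MonoidAlgebra ℤ G) →ₗ[MonoidAlgebra ℤ G] swanModule G r :=
    { toFun := fun p => p.1 • m₁ + p.2 • m₂
      map_add' := by intro a b; simp only [Prod.fst_add, Prod.snd_add, add_smul]; abel
      map_smul' := by intro c p; simp only [Prod.smul_fst, Prod.smul_snd, smul_eq_mul,
        RingHom.id_apply, smul_add, mul_smul] }
  -- the section
  let i : swanModule G r →ₗ[MonoidAlgebra ℤ G] (MonoidAlgebra ℤ G × MonoidAlgebra ℤ G) :=
    { toFun := fun x => (u • (x : MonoidAlgebra ℤ G)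
          + (v * (aug G (x : MonoidAlgebra ℤ G) / r)) • N, v • (x : MonoidAlgebra ℤ G))
      map_add' := by
        intro x y
        have hdiv : aug G ((x : MonoidAlgebra ℤ G) + (y : MonoidAlgebra ℤ G)) / r
            = aug G (x : MonoidAlgebra ℤ G) / r + aug G (y : MonoidAlgebra ℤ G) / r := by
          rw [map_add, Int.add_ediv_of_dvd_left x.2]
        refine Prod.ext ?_ ?_
        · dsimp only
          rw [Prod.fst_add, Submodule.coe_add, hdiv, smul_add, mul_add, add_smul]
          dsimp only
          abel
        · dsimp only
          rw [Prod.snd_add, Submodule.coe_add, smul_add]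
      map_smul' := by
        intro c x
        have hdiv : aug G (c • (x : MonoidAlgebra ℤ G)) / r
            = aug G c * (aug G (x : MonoidAlgebra ℤ G) / r) := by
          rw [smul_eq_mul, map_mul]
          exact Int.mul_ediv_assoc _ x.2
        refine Prod.ext ?_ ?_
        · dsimp only
          simp only [RingHom.id_apply, Prod.smul_fst]
          rw [Submodule.coe_smul, hdiv, smul_eq_mul, smul_eq_mul, mul_add, mul_smul_comm,
            mul_smul_comm, hN, mul_nrm]
          match_scalars <;> ring
        · dsimp only
          simp only [RingHom.id_apply, Prod.smul_snd]
          rw [Submodule.coe_smul, smul_eq_mul, smul_eq_mul, mul_smul_comm] }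
  refine Module.Projective.of_split i s (LinearMap.ext fun x => Subtype.ext ?_)
  have hxr : r * (aug G (x : MonoidAlgebra ℤ G) / r) = aug G (x : MonoidAlgebra ℤ G) :=
    Int.mul_ediv_cancel' x.2
  show (((u • (x : MonoidAlgebra ℤ G)
        + (v * (aug G (x : MonoidAlgebra ℤ G) / r)) • N) • m₁
      + (v • (x : MonoidAlgebra ℤ G)) • m₂ : swanModule G r) : MonoidAlgebra ℤ G)
    = (x : MonoidAlgebra ℤ G)
  rw [Submodule.coe_add, Submodule.coe_smul, Submodule.coe_smul]
  show (u • (x : MonoidAlgebra ℤ G) + (v * (aug G (x : MonoidAlgebra ℤ G) / r)) • N)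
        * (r • (1 : MonoidAlgebra ℤ G))
      + (v • (x : MonoidAlgebra ℤ G)) * (q • (1 : MonoidAlgebra ℤ G) - N)
    = (x : MonoidAlgebra ℤ G)
  rw [mul_sub, mul_smul_comm, mul_smul_comm, mul_one, mul_one, smul_mul_assoc,
    hN, mul_nrm]
  match_scalars
  · linear_combination huv
  · linear_combination v * hxr
end

section
/- The torsion Euler characteristic is multiplicative under composition: if f : X → Y and g : Y → Z are maps of spaces (or chain maps of chain complexes) which are rational homology equivalences with finite homology of the mapping cones, then χ^tor(g ∘ f) = χ^tor(g) · χ^tor(f), where χ^tor(f) = ∏_i |H_i(C_f)|^{(-1)^i} and C_f is the mapping cone of f. -/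
open CategoryTheory

/-- The range of a morphism of `ℤ`-modules, as an `AddSubgroup`. -/
private noncomputable def modRange {A B : ModuleCat ℤ} (φ : A ⟶ B) : AddSubgroup B :=
  (AddMonoidHom.mk' ⇑(ConcreteCategory.hom φ) (map_add (ConcreteCategory.hom φ))).range

private lemma card_mul_of_exact {A B C : ModuleCat ℤ} (φ : A ⟶ B) (ψ : B ⟶ C)
    (w : φ ≫ ψ = 0) (h : (ShortComplex.mk φ ψ w).Exact) [Finite B] :
    Nat.card B = Nat.card (modRange φ) * Nat.card (modRange ψ) := by
  have hsur : ∀ x, ψ x = 0 → ∃ y, φ y = x := (ShortComplex.moduleCat_exact_iff _).1 h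
  have hzero : ∀ y, ψ (φ y) = 0 := fun y => (ShortComplex.mk φ ψ w).moduleCat_zero_apply y
  have hker : (AddMonoidHom.mk' ⇑(ConcreteCategory.hom ψ) (map_add (ConcreteCategory.hom ψ))).ker = modRange φ := by
    ext x
    constructor
    · intro hx
      obtain ⟨y, hy⟩ := hsur x hx
      exact ⟨y, hy⟩
    · rintro ⟨y, rfl⟩
      exact hzero y
  have h1 : Nat.card (B ⧸ (AddMonoidHom.mk' ⇑(ConcreteCategory.hom ψ) (map_add (ConcreteCategory.hom ψ))).ker) = Nat.card (modRange ψ) :=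
    Nat.card_congr (QuotientAddGroup.quotientKerEquivRange
      (AddMonoidHom.mk' ⇑(ConcreteCategory.hom ψ) (map_add (ConcreteCategory.hom ψ)))).toEquiv
  have h2 : Nat.card (AddMonoidHom.mk' ⇑(ConcreteCategory.hom ψ) (map_add (ConcreteCategory.hom ψ))).ker = Nat.card (modRange φ) := by
    rw [hker]
  rw [AddSubgroup.card_eq_card_quotient_mul_card_addSubgroup
    (AddMonoidHom.mk' ⇑(ConcreteCategory.hom ψ) (map_add (ConcreteCategory.hom ψ))).ker, h1, h2, mul_comm]

private lemma card_of_iso {M N : ModuleCat ℤ} (e : M ≅ N) : Nat.card M = Nat.card N :=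
  Nat.card_congr ((forget _).mapIso e).toEquiv

private lemma finite_of_iso {M N : ModuleCat ℤ} (e : M ≅ N) [Finite N] : Finite M :=
  Finite.of_equiv _ ((forget _).mapIso e).toEquiv.symm

private lemma modRange_card_pos {A B : ModuleCat ℤ} (φ : A ⟶ B) [Finite B] :
    0 < Nat.card (modRange φ) :=
  Nat.card_pos

private lemma modRange_card_one_of_cod {A B : ModuleCat ℤ} (φ : A ⟶ B)
    [Finite B] (h : Nat.card B = 1) : Nat.card (modRange φ) = 1 := by
  have : Subsingleton B := (Nat.card_eq_one_iff_unique.1 h).1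
  have : Subsingleton (modRange φ) := inferInstance
  exact Nat.card_unique

private lemma modRange_card_one_of_dom {A B : ModuleCat ℤ} (φ : A ⟶ B)
    [Finite A] (h : Nat.card A = 1) : Nat.card (modRange φ) = 1 := by
  have hA : Subsingleton A := (Nat.card_eq_one_iff_unique.1 h).1
  have : Subsingleton (modRange φ) := by
    constructor
    rintro ⟨_, a, rfl⟩ ⟨_, b, rfl⟩
    simp [Subsingleton.elim a b]
  exact Nat.card_unique

private def epsP (i : ℤ) (x : ℕ) : ℚ := if Even i then (x : ℚ) else (x : ℚ)⁻¹

private lemma epsP_mul (i : ℤ) (x y : ℕ) : epsP i (x * y) = epsP i x * epsP i y := by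
  unfold epsP
  split <;> push_cast <;> simp [mul_inv, mul_comm]

private lemma epsP_one (i : ℤ) : epsP i 1 = 1 := by unfold epsP; split <;> simp

private lemma epsP_ne_zero (i : ℤ) {x : ℕ} (hx : 0 < x) : epsP i x ≠ 0 := by
  unfold epsP
  have : (x : ℚ) ≠ 0 := by positivity
  split <;> simp [this]

private lemma epsP_succ (i : ℤ) (x : ℕ) : epsP (i + 1) x = (epsP i x)⁻¹ := by
  unfold epsP
  by_cases h : Even i
  · rw [if_neg (by simp [Int.even_add_one, h]), if_pos h]
  · rw [if_pos (Int.even_add_one.2 h), if_neg h, inv_inv]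

private lemma key (N : ℕ) (k r₁ r₂ : ℤ → ℕ)
    (hk : ∀ i, 0 < k i)
    (kN : k N = 1) (kneg : k (-(N : ℤ) - 1) = 1) :
    (∏ i ∈ Finset.Icc (-(N : ℤ)) N, epsP i (r₁ i * r₂ i)) =
      (∏ i ∈ Finset.Icc (-(N : ℤ)) N, epsP i (r₂ i * k i)) *
        (∏ i ∈ Finset.Icc (-(N : ℤ)) N, epsP i (k (i - 1) * r₁ i)) := by
  simp only [epsP_mul, Finset.prod_mul_distrib]
  set A := ∏ i ∈ Finset.Icc (-(N : ℤ)) N, epsP i (r₁ i) with hA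
  set B := ∏ i ∈ Finset.Icc (-(N : ℤ)) N, epsP i (r₂ i) with hB
  set K := ∏ i ∈ Finset.Icc (-(N : ℤ)) N, epsP i (k i) with hK
  set K' := ∏ i ∈ Finset.Icc (-(N : ℤ)) N, epsP i (k (i - 1)) with hK'
  have hKfull : K = ∏ i ∈ Finset.Icc (-(N : ℤ) - 1) N, epsP i (k i) := by
    rw [hK]
    refine Finset.prod_subset (Finset.Icc_subset_Icc (by omega) le_rfl) ?_
    intro i hi hni
    simp only [Finset.mem_Icc] at hi hni
    have : i = -(N : ℤ) - 1 := by omega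
    rw [this, kneg, epsP_one]
  have hK'eq : K' = ∏ i ∈ Finset.Icc (-(N : ℤ) - 1) (N - 1), (epsP i (k i))⁻¹ := by
    rw [hK']
    have hmap : Finset.Icc (-(N : ℤ)) (N : ℤ) =
        Finset.map (addRightEmbedding (1 : ℤ)) (Finset.Icc (-(N : ℤ) - 1) ((N : ℤ) - 1)) := by
      rw [Finset.map_add_right_Icc]
      congr 1 <;> omega
    rw [hmap, Finset.prod_map]
    refine Finset.prod_congr rfl fun j _ => ?_
    simp only [addRightEmbedding_apply, add_sub_cancel_right]
    exact epsP_succ j (k j)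
  have hK'full : K' = ∏ i ∈ Finset.Icc (-(N : ℤ) - 1) N, (epsP i (k i))⁻¹ := by
    rw [hK'eq]
    refine Finset.prod_subset (Finset.Icc_subset_Icc le_rfl (by omega)) ?_
    intro i hi hni
    simp only [Finset.mem_Icc] at hi hni
    have : i = (N : ℤ) := by omega
    rw [this, kN, epsP_one, inv_one]
  have hmain : K * K' = 1 := by
    rw [hKfull, hK'full, ← Finset.prod_mul_distrib]
    refine Finset.prod_eq_one fun i _ => ?_
    exact mul_inv_cancel₀ (epsP_ne_zero i (hk i))
  calc A * B = (A * B) * (K * K') := by rw [hmain, mul_one]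
  _ = B * K * (K' * A) := by ring

/-- the torsion Euler characteristic
`χ^tor(f) = ∏ᵢ |H_i(C_f)|^{(-1)^i}` is multiplicative under composition: for chain maps
`f : X ⟶ Y`, `g : Y ⟶ Z` of (co)chain complexes which are rational homology
equivalences — i.e. the homology of each mapping cone is finite in every degree and
trivial outside a finite range — one has `χ^tor(g ∘ f) = χ^tor(g) · χ^tor(f)`. -/
theorem chi_tor_multiplicative
    {X Y Z : CochainComplex (ModuleCat ℤ) ℤ} (f : X ⟶ Y) (g : Y ⟶ Z)
    (hf : ∀ i : ℤ, Finite ((CochainComplex.mappingCone f).homology i))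
    (hg : ∀ i : ℤ, Finite ((CochainComplex.mappingCone g).homology i))
    (hgf : ∀ i : ℤ, Finite ((CochainComplex.mappingCone (f ≫ g)).homology i))
    (N : ℕ)
    (hfN : ∀ i : ℤ, N < i.natAbs → Nat.card ((CochainComplex.mappingCone f).homology i) = 1)
    (hgN : ∀ i : ℤ, N < i.natAbs → Nat.card ((CochainComplex.mappingCone g).homology i) = 1)
    (hgfN : ∀ i : ℤ, N < i.natAbs →
      Nat.card ((CochainComplex.mappingCone (f ≫ g)).homology i) = 1) :
    (∏ i ∈ Finset.Icc (-(N : ℤ)) N,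
        (if Even i then (Nat.card ((CochainComplex.mappingCone (f ≫ g)).homology i) : ℚ)
          else (Nat.card ((CochainComplex.mappingCone (f ≫ g)).homology i) : ℚ)⁻¹)) =
    (∏ i ∈ Finset.Icc (-(N : ℤ)) N,
        (if Even i then (Nat.card ((CochainComplex.mappingCone g).homology i) : ℚ)
          else (Nat.card ((CochainComplex.mappingCone g).homology i) : ℚ)⁻¹)) *
    (∏ i ∈ Finset.Icc (-(N : ℤ)) N,
        (if Even i then (Nat.card ((CochainComplex.mappingCone f).homology i) : ℚ)
          else (Nat.card ((CochainComplex.mappingCone f).homology i) : ℚ)⁻¹)) := by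
  classical
  let F := HomotopyCategory.homologyFunctor (ModuleCat ℤ) (ComplexShape.up ℤ) 0
  let T := CochainComplex.mappingConeCompTriangleh f g
  have hT : T ∈ distTriang (HomotopyCategory (ModuleCat ℤ) (ComplexShape.up ℤ)) :=
    HomotopyCategory.mappingConeCompTriangleh_distinguished f g
  -- comparison isos between the homology computed in the homotopy category and directly
  have e₁ : ∀ n : ℤ, (F.shift n).obj T.obj₁ ≅ (CochainComplex.mappingCone f).homology n :=
    fun n => (HomotopyCategory.homologyFunctorFactors (ModuleCat ℤ) (ComplexShape.up ℤ) n).app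
      (CochainComplex.mappingCone f)
  have e₂ : ∀ n : ℤ, (F.shift n).obj T.obj₂ ≅ (CochainComplex.mappingCone (f ≫ g)).homology n :=
    fun n => (HomotopyCategory.homologyFunctorFactors (ModuleCat ℤ) (ComplexShape.up ℤ) n).app
      (CochainComplex.mappingCone (f ≫ g))
  have e₃ : ∀ n : ℤ, (F.shift n).obj T.obj₃ ≅ (CochainComplex.mappingCone g).homology n :=
    fun n => (HomotopyCategory.homologyFunctorFactors (ModuleCat ℤ) (ComplexShape.up ℤ) n).app
      (CochainComplex.mappingCone g)
  have hFin₁ : ∀ n : ℤ, Finite ((F.shift n).obj T.obj₁) := fun n => by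
    have := hf n; exact finite_of_iso (e₁ n)
  have hFin₂ : ∀ n : ℤ, Finite ((F.shift n).obj T.obj₂) := fun n => by
    have := hgf n; exact finite_of_iso (e₂ n)
  have hFin₃ : ∀ n : ℤ, Finite ((F.shift n).obj T.obj₃) := fun n => by
    have := hg n; exact finite_of_iso (e₃ n)
  have hA : ∀ n : ℤ, Nat.card ((F.shift n).obj T.obj₁) =
      Nat.card ((CochainComplex.mappingCone f).homology n) := fun n => card_of_iso (e₁ n)
  have hB : ∀ n : ℤ, Nat.card ((F.shift n).obj T.obj₂) =
      Nat.card ((CochainComplex.mappingCone (f ≫ g)).homology n) := fun n => card_of_iso (e₂ n)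
  have hC : ∀ n : ℤ, Nat.card ((F.shift n).obj T.obj₃) =
      Nat.card ((CochainComplex.mappingCone g).homology n) := fun n => card_of_iso (e₃ n)
  -- the three families of ranges
  set r₁ : ℤ → ℕ := fun n => Nat.card (modRange ((F.shift n).map T.mor₁)) with hr₁def
  set r₂ : ℤ → ℕ := fun n => Nat.card (modRange ((F.shift n).map T.mor₂)) with hr₂def
  set k : ℤ → ℕ := fun n =>
    Nat.card (modRange (F.homologySequenceδ T n (n + 1) rfl)) with hkdef
  -- exactness relations
  have hex₂ : ∀ n : ℤ, Nat.card ((F.shift n).obj T.obj₂) = r₁ n * r₂ n := fun n => by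
    have := hFin₂ n
    exact card_mul_of_exact _ _ _ (F.homologySequence_exact₂ T hT n)
  have hex₃ : ∀ n : ℤ, Nat.card ((F.shift n).obj T.obj₃) = r₂ n * k n := fun n => by
    have := hFin₃ n
    exact card_mul_of_exact _ _ _ (F.homologySequence_exact₃ T hT n (n + 1) rfl)
  have hex₁ : ∀ n : ℤ, Nat.card ((F.shift (n + 1)).obj T.obj₁) = k n * r₁ (n + 1) := fun n => by
    have := hFin₁ (n + 1)
    exact card_mul_of_exact _ _ _ (F.homologySequence_exact₁ T hT n (n + 1) rfl)
  -- relations on the cards in the statement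
  have HB : ∀ i : ℤ, Nat.card ((CochainComplex.mappingCone (f ≫ g)).homology i) =
      r₁ i * r₂ i := fun i => by rw [← hB i]; exact hex₂ i
  have HC : ∀ i : ℤ, Nat.card ((CochainComplex.mappingCone g).homology i) =
      r₂ i * k i := fun i => by rw [← hC i]; exact hex₃ i
  have HA : ∀ i : ℤ, Nat.card ((CochainComplex.mappingCone f).homology i) =
      k (i - 1) * r₁ i := fun i => by
    have h := hex₁ (i - 1)
    rw [sub_add_cancel] at h
    rw [← hA i]; exact h
  -- positivity and vanishing at the boundary
  have hkpos : ∀ i : ℤ, 0 < k i := fun i => by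
    have := hFin₁ (i + 1)
    exact modRange_card_pos _
  have hkN : k N = 1 := by
    have := hFin₁ ((N : ℤ) + 1)
    refine modRange_card_one_of_cod _ ?_
    rw [hA]
    exact hfN _ (by omega)
  have hkneg : k (-(N : ℤ) - 1) = 1 := by
    have := hFin₃ (-(N : ℤ) - 1)
    refine modRange_card_one_of_dom _ ?_
    rw [hC]
    exact hgN _ (by omega)
  have g1 : (∏ i ∈ Finset.Icc (-(N : ℤ)) N,
      (if Even i then (Nat.card ((CochainComplex.mappingCone (f ≫ g)).homology i) : ℚ)
        else (Nat.card ((CochainComplex.mappingCone (f ≫ g)).homology i) : ℚ)⁻¹)) =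
      ∏ i ∈ Finset.Icc (-(N : ℤ)) N, epsP i (r₁ i * r₂ i) :=
    Finset.prod_congr rfl fun i _ => by unfold epsP; rw [HB i]
  have g2 : (∏ i ∈ Finset.Icc (-(N : ℤ)) N,
      (if Even i then (Nat.card ((CochainComplex.mappingCone g).homology i) : ℚ)
        else (Nat.card ((CochainComplex.mappingCone g).homology i) : ℚ)⁻¹)) =
      ∏ i ∈ Finset.Icc (-(N : ℤ)) N, epsP i (r₂ i * k i) :=
    Finset.prod_congr rfl fun i _ => by unfold epsP; rw [HC i]
  have g3 : (∏ i ∈ Finset.Icc (-(N : ℤ)) N,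
      (if Even i then (Nat.card ((CochainComplex.mappingCone f).homology i) : ℚ)
        else (Nat.card ((CochainComplex.mappingCone f).homology i) : ℚ)⁻¹)) =
      ∏ i ∈ Finset.Icc (-(N : ℤ)) N, epsP i (k (i - 1) * r₁ i) :=
    Finset.prod_congr rfl fun i _ => by unfold epsP; rw [HA i]
  rw [g1, g2, g3]
  exact key N k r₁ r₂ hkpos hkN hkneg
end

section
/- If A_*, B_*, C_* are graded abelian groups with C_* finitely generated free and f_* : A_* → B_* is a graded map which is a rational isomorphism with finite kernel and cokernel in each degree, then χ^tor(f_* ⊗ id_{C_*}) = χ^tor(f_*)^{χ(C_*)}, where χ(C_*) is the Euler characteristic of C_* and χ^tor is the alternating product of the orders of the homology of the mapping cone. -/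
open DirectSum

section

variable {A B C : ℤ → Type} [∀ i, AddCommGroup (A i)] [∀ i, AddCommGroup (B i)]
  [∀ i, AddCommGroup (C i)]

/-- The degree-`n` piece of the graded map `f_* ⊗ id_{C_*}` on the graded tensor
product, `(A ⊗ C)_n = ⨁_j A_{n-j} ⊗ C_j → (B ⊗ C)_n = ⨁_j B_{n-j} ⊗ C_j`. -/
noncomputable def gradedTensorMap (f : ∀ i, A i →ₗ[ℤ] B i) (n : ℤ) :
    (⨁ j : ℤ, TensorProduct ℤ (A (n - j)) (C j)) →ₗ[ℤ]
      (⨁ j : ℤ, TensorProduct ℤ (B (n - j)) (C j)) :=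
  DFinsupp.mapRange.linearMap (fun j => TensorProduct.map (f (n - j)) LinearMap.id)

/-- The local factor `(|coker|/|ker|)^{(-1)^i}` of `χ^tor` of a linear map. -/
noncomputable def chiTorFactor {M N : Type*} [AddCommGroup M] [AddCommGroup N]
    [Module ℤ M] [Module ℤ N] (φ : M →ₗ[ℤ] N) (i : ℤ) : ℚ :=
  if Even i then (Nat.card (N ⧸ LinearMap.range φ) : ℚ) / (Nat.card (LinearMap.ker φ))
  else (Nat.card (LinearMap.ker φ) : ℚ) / (Nat.card (N ⧸ LinearMap.range φ))

end


/-! ### Auxiliary lemmas -/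


section Master
variable {ι : Type} [Fintype ι] {M N : Type*} [AddCommGroup M] [AddCommGroup N]
  [Module ℤ M] [Module ℤ N]
  {P Q : ι → Type*} [∀ j, AddCommGroup (P j)] [∀ j, AddCommGroup (Q j)]
  [∀ j, Module ℤ (P j)] [∀ j, Module ℤ (Q j)]
  (φ : M →ₗ[ℤ] N) (k : ∀ j, P j →ₗ[ℤ] Q j)

theorem master_card_ker (e₁ : M ≃ (∀ j, P j)) (e₂ : N ≃+ (∀ j, Q j))
    (h : ∀ x j, e₂ (φ x) j = k j (e₁ x j)) :
    Nat.card (LinearMap.ker φ) = ∏ j, Nat.card (LinearMap.ker (k j)) := by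
  have equiv1 : LinearMap.ker φ ≃ ∀ j, LinearMap.ker (k j) :=
    (Equiv.subtypeEquiv e₁ (fun x => by
      rw [LinearMap.mem_ker]
      constructor
      · intro hx j
        rw [← h, hx, map_zero]
        rfl
      · intro hx
        have : e₂ (φ x) = 0 := funext fun j => by rw [h, hx j]; rfl
        exact (map_eq_zero_iff _ e₂.injective).mp this)).trans
      ((Equiv.subtypePiEquivPi).trans
        (Equiv.piCongrRight fun j => Equiv.subtypeEquivRight fun m =>
          (LinearMap.mem_ker).symm))
  rw [Nat.card_congr equiv1, Nat.card_pi]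

theorem master_card_coker (e₁ : M ≃ (∀ j, P j)) (e₂ : N ≃+ (∀ j, Q j))
    (h : ∀ x j, e₂ (φ x) j = k j (e₁ x j)) :
    Nat.card (N ⧸ LinearMap.range φ) = ∏ j, Nat.card (Q j ⧸ LinearMap.range (k j)) := by
  classical
  let F : (N ⧸ LinearMap.range φ) → ∀ j, Q j ⧸ LinearMap.range (k j) := fun y =>
    Quotient.liftOn' y (fun y j => Submodule.Quotient.mk (e₂ y j)) (by
      intro a b hab
      rw [Submodule.quotientRel_def] at hab
      obtain ⟨x, hx⟩ := hab
      funext j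
      rw [Submodule.Quotient.eq]
      exact ⟨e₁ x j, by rw [← h, hx, map_sub]; rfl⟩)
  have hFmk : ∀ (y : N) (j : ι), F (Submodule.Quotient.mk y) j = Submodule.Quotient.mk (e₂ y j) :=
    fun y j => rfl
  have hsurj : Function.Surjective F := by
    intro w
    refine ⟨Submodule.Quotient.mk (e₂.symm (fun j => (w j).out)), funext fun j => ?_⟩
    rw [hFmk, e₂.apply_symm_apply]
    exact Quotient.out_eq (w j)
  have hinj : Function.Injective F := by
    intro a b
    induction a using Quotient.inductionOn' with
    | h ya =>
    induction b using Quotient.inductionOn' with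
    | h yb =>
    intro hF
    have hF' : ∀ j, e₂ ya j - e₂ yb j ∈ LinearMap.range (k j) := by
      intro j
      have := congrFun hF j
      rw [show (Quotient.mk'' ya : N ⧸ LinearMap.range φ) = Submodule.Quotient.mk ya from rfl,
        show (Quotient.mk'' yb : N ⧸ LinearMap.range φ) = Submodule.Quotient.mk yb from rfl,
        hFmk, hFmk, Submodule.Quotient.eq] at this
      exact this
    choose c hc using hF'
    have hφ : φ (e₁.symm c) = ya - yb := by
      apply e₂.injective
      rw [map_sub]
      funext j
      rw [h _ j, e₁.apply_symm_apply, hc j]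
      rfl
    show (Submodule.Quotient.mk ya : N ⧸ LinearMap.range φ) = Submodule.Quotient.mk yb
    rw [Submodule.Quotient.eq]
    exact ⟨e₁.symm c, hφ⟩
  rw [Nat.card_congr (Equiv.ofBijective F ⟨hinj, hsurj⟩), Nat.card_pi]

end Master

open DirectSum

section DSum
variable {M : ℤ → Type} [∀ j, AddCommGroup (M j)] (s : Finset ℤ)

/-- Sum of components as an element of the direct sum. -/
noncomputable def sumSingle (v : ∀ j : s, M (j : ℤ)) : ⨁ j : ℤ, M j :=
  ∑ j : s, DirectSum.of M (j : ℤ) (v j)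

theorem sumSingle_apply (v : ∀ j : s, M (j : ℤ)) (k : s) :
    sumSingle s v (k : ℤ) = v k := by
  classical
  rw [sumSingle, DFinsupp.finset_sum_apply,
    Finset.sum_eq_single_of_mem k (Finset.mem_univ k)]
  · exact DirectSum.of_eq_same _ _
  · intro j _ hjk
    exact DirectSum.of_eq_of_ne _ _ _ (fun h => hjk (Subtype.coe_injective h.symm))

theorem sumSingle_apply_not_mem (v : ∀ j : s, M (j : ℤ)) (k : ℤ) (hk : k ∉ s) :
    sumSingle s v k = 0 := by
  classical
  rw [sumSingle, DFinsupp.finset_sum_apply, Finset.sum_eq_zero]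
  intro j _
  exact DirectSum.of_eq_of_ne _ _ _ (fun hjk => hk (hjk ▸ j.2))

/-- A direct sum with components trivial off `s` is the product over `s`, additively. -/
noncomputable def dsumAddEquiv (h : ∀ j : ℤ, j ∉ s → Subsingleton (M j)) :
    (⨁ j : ℤ, M j) ≃+ ∀ j : s, M (j : ℤ) where
  toFun x j := x (j : ℤ)
  invFun := sumSingle s
  left_inv x := by
    refine DFunLike.ext _ _ fun k => ?_
    by_cases hk : k ∈ s
    · exact sumSingle_apply s _ ⟨k, hk⟩
    · rw [sumSingle_apply_not_mem s _ k hk]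
      have := h k hk
      exact Subsingleton.elim _ _
  right_inv v := by
    funext k
    exact sumSingle_apply s v k
  map_add' x y := by
    funext j
    exact DFinsupp.add_apply x y (j : ℤ)

variable {N : ℤ → Type} [∀ j, AddCommGroup (N j)]

theorem dsum_natural (g : ∀ j, M j →ₗ[ℤ] N j)
    (hM : ∀ j : ℤ, j ∉ s → Subsingleton (M j)) (hN : ∀ j : ℤ, j ∉ s → Subsingleton (N j))
    (x : ⨁ j : ℤ, M j) (j : s) :
    (dsumAddEquiv s hN) (DFinsupp.mapRange.linearMap g x) j
      = g (j : ℤ) (((dsumAddEquiv s hM).toEquiv x) j) := by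
  show (DFinsupp.mapRange.linearMap g x) (j : ℤ) = g (j : ℤ) (x (j : ℤ))
  simp [DFinsupp.mapRange.linearMap]
  rfl

theorem card_ker_mapRange (g : ∀ j, M j →ₗ[ℤ] N j)
    (hM : ∀ j : ℤ, j ∉ s → Subsingleton (M j)) (hN : ∀ j : ℤ, j ∉ s → Subsingleton (N j)) :
    Nat.card (LinearMap.ker (DFinsupp.mapRange.linearMap g :
        (⨁ j : ℤ, M j) →ₗ[ℤ] ⨁ j : ℤ, N j)) = ∏ j ∈ s, Nat.card (LinearMap.ker (g j)) := by
  rw [master_card_ker (DFinsupp.mapRange.linearMap g) (fun j : s => g (j : ℤ))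
    (dsumAddEquiv s hM).toEquiv (dsumAddEquiv s hN) (dsum_natural s g hM hN)]
  exact Finset.prod_coe_sort s (fun j => Nat.card (LinearMap.ker (g j)))

theorem card_coker_mapRange (g : ∀ j, M j →ₗ[ℤ] N j)
    (hM : ∀ j : ℤ, j ∉ s → Subsingleton (M j)) (hN : ∀ j : ℤ, j ∉ s → Subsingleton (N j)) :
    Nat.card ((⨁ j : ℤ, N j) ⧸ LinearMap.range (DFinsupp.mapRange.linearMap g :
        (⨁ j : ℤ, M j) →ₗ[ℤ] ⨁ j : ℤ, N j)) =
      ∏ j ∈ s, Nat.card (N j ⧸ LinearMap.range (g j)) := by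
  exact (master_card_coker (DFinsupp.mapRange.linearMap g) (fun j : s => g (j : ℤ))
    (dsumAddEquiv s hM).toEquiv (dsumAddEquiv s hN) (dsum_natural s g hM hN)).trans
      (Finset.prod_coe_sort s (fun j => Nat.card (N j ⧸ LinearMap.range (g j))))

end DSum

section Tensor
variable {M N C : Type} [AddCommGroup M] [AddCommGroup N] [AddCommGroup C]
  [Module.Free ℤ C] [Module.Finite ℤ C]

private noncomputable def tensorEquivAux (M : Type) [AddCommGroup M] :
    (TensorProduct ℤ M C) ≃ₗ[ℤ]
      (Module.Free.ChooseBasisIndex ℤ C → M) :=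
  (TensorProduct.congr (LinearEquiv.refl ℤ M)
    (Module.Free.chooseBasis ℤ C).equivFun).trans
    (TensorProduct.piScalarRight ℤ ℤ M (Module.Free.ChooseBasisIndex ℤ C))

private theorem tensor_natural (φ : M →ₗ[ℤ] N) (x : TensorProduct ℤ M C)
    (j : Module.Free.ChooseBasisIndex ℤ C) :
    (tensorEquivAux (C := C) N).toAddEquiv (TensorProduct.map φ LinearMap.id x) j
      = φ (((tensorEquivAux (C := C) M).toEquiv x) j) := by
  show (tensorEquivAux (C := C) N) (TensorProduct.map φ LinearMap.id x) j
      = φ ((tensorEquivAux (C := C) M) x j)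
  induction x using TensorProduct.induction_on with
  | zero => simp
  | tmul m c =>
    rw [TensorProduct.map_tmul]
    simp only [tensorEquivAux, LinearEquiv.trans_apply, TensorProduct.congr_tmul,
      LinearEquiv.refl_apply, TensorProduct.piScalarRight_apply,
      TensorProduct.piScalarRightHom_tmul, LinearMap.id_coe, id_eq]
    show (TensorProduct.piScalarRight ℤ ℤ N _) ((TensorProduct.congr (LinearEquiv.refl ℤ N)
        (Module.Free.chooseBasis ℤ C).equivFun) (φ m ⊗ₜ c)) j = φ ((TensorProduct.piScalarRight
        ℤ ℤ M _) ((TensorProduct.congr (LinearEquiv.refl ℤ M)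
        (Module.Free.chooseBasis ℤ C).equivFun) (m ⊗ₜ c)) j)
    simp only [TensorProduct.congr_tmul, LinearEquiv.refl_apply, TensorProduct.piScalarRight_apply,
      TensorProduct.piScalarRightHom_tmul]
    rw [map_smul]
  | add x y hx hy =>
    rw [map_add, map_add, map_add]
    simp only [Pi.add_apply, hx, hy, map_add]

theorem card_ker_tensor (φ : M →ₗ[ℤ] N) :
    Nat.card (LinearMap.ker (TensorProduct.map φ (LinearMap.id (M := C)))) =
      Nat.card (LinearMap.ker φ) ^ (Module.finrank ℤ C) := by
  rw [master_card_ker (TensorProduct.map φ (LinearMap.id (M := C)))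
    (fun _ : Module.Free.ChooseBasisIndex ℤ C => φ)
    (tensorEquivAux (C := C) M).toEquiv (tensorEquivAux (C := C) N).toAddEquiv
    (tensor_natural φ), Finset.prod_const, Finset.card_univ,
    Module.finrank_eq_card_chooseBasisIndex ℤ C]

theorem card_coker_tensor (φ : M →ₗ[ℤ] N) :
    Nat.card ((TensorProduct ℤ N C) ⧸
        LinearMap.range (TensorProduct.map φ (LinearMap.id (M := C)))) =
      Nat.card (N ⧸ LinearMap.range φ) ^ (Module.finrank ℤ C) := by
  rw [master_card_coker (TensorProduct.map φ (LinearMap.id (M := C)))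
    (fun _ : Module.Free.ChooseBasisIndex ℤ C => φ)
    (tensorEquivAux (C := C) M).toEquiv (tensorEquivAux (C := C) N).toAddEquiv
    (tensor_natural φ), Finset.prod_const, Finset.card_univ,
    Module.finrank_eq_card_chooseBasisIndex ℤ C]

end Tensor

section Factor

theorem tensor_subsingleton (M C : Type) [AddCommGroup M] [AddCommGroup C]
    (hC : Subsingleton C) : Subsingleton (TensorProduct ℤ M C) := by
  have hzero : ∀ x : TensorProduct ℤ M C, x = 0 := by
    intro x
    induction x using TensorProduct.induction_on with
    | zero => rfl
    | tmul m c => rw [Subsingleton.elim c 0, TensorProduct.tmul_zero]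
    | add x y hx hy => rw [hx, hy, add_zero]
  exact ⟨fun a b => by rw [hzero a, hzero b]⟩

variable {M N : Type*} [AddCommGroup M] [AddCommGroup N] [Module ℤ M] [Module ℤ N]

theorem card_ker_pos (φ : M →ₗ[ℤ] N) (h : Finite (LinearMap.ker φ)) :
    0 < (Nat.card (LinearMap.ker φ) : ℚ) := by
  have : Nonempty (LinearMap.ker φ) := ⟨0⟩
  exact_mod_cast Nat.card_pos

theorem card_coker_pos (φ : M →ₗ[ℤ] N) (h : Finite (N ⧸ LinearMap.range φ)) :
    0 < (Nat.card (N ⧸ LinearMap.range φ) : ℚ) := by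
  have : Nonempty (N ⧸ LinearMap.range φ) := ⟨0⟩
  exact_mod_cast Nat.card_pos

theorem chiTorFactor_pos (φ : M →ₗ[ℤ] N) (h1 : Finite (LinearMap.ker φ))
    (h2 : Finite (N ⧸ LinearMap.range φ)) (i : ℤ) : 0 < chiTorFactor φ i := by
  unfold chiTorFactor
  split_ifs
  · exact div_pos (card_coker_pos φ h2) (card_ker_pos φ h1)
  · exact div_pos (card_ker_pos φ h1) (card_coker_pos φ h2)

theorem chiTorFactor_triv (φ : M →ₗ[ℤ] N) (hM : Subsingleton M) (hN : Subsingleton N)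
    (i : ℤ) : chiTorFactor φ i = 1 := by
  have h1 : Nat.card (LinearMap.ker φ) = 1 :=
    Nat.card_eq_one_iff_unique.mpr ⟨inferInstance, ⟨0⟩⟩
  have hq : Subsingleton (N ⧸ LinearMap.range φ) :=
    Submodule.Quotient.mk_surjective _ |>.subsingleton
  have h2 : Nat.card (N ⧸ LinearMap.range φ) = 1 :=
    Nat.card_eq_one_iff_unique.mpr ⟨hq, ⟨0⟩⟩
  unfold chiTorFactor
  rw [h1, h2]
  norm_num

end Factor

section FactorTensor
variable {M N C : Type} [AddCommGroup M] [AddCommGroup N] [AddCommGroup C]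
  [Module.Free ℤ C] [Module.Finite ℤ C]

theorem chiTorFactor_tensor (φ : M →ₗ[ℤ] N) (n i : ℤ) :
    chiTorFactor (TensorProduct.map φ (LinearMap.id (M := C))) n =
      chiTorFactor φ i ^
        (if Even (n - i) then (Module.finrank ℤ C : ℤ) else -(Module.finrank ℤ C : ℤ)) := by
  unfold chiTorFactor
  rw [card_ker_tensor, card_coker_tensor]
  rcases Int.even_or_odd n with hn | hn <;> rcases Int.even_or_odd i with hi | hi
  · rw [if_pos hn, if_pos hi, if_pos (Int.even_sub.mpr (by simp [hn, hi])),
      zpow_natCast, div_pow]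
    push_cast
    ring
  · rw [if_pos hn, if_neg (Int.not_even_iff_odd.mpr hi),
      if_neg (by rw [Int.even_sub]; simp [hn, Int.not_even_iff_odd.mpr hi]),
      zpow_neg, zpow_natCast, div_pow, inv_div]
    push_cast
    ring
  · rw [if_neg (Int.not_even_iff_odd.mpr hn), if_pos hi,
      if_neg (by rw [Int.even_sub]; simp [hi, Int.not_even_iff_odd.mpr hn]),
      zpow_neg, zpow_natCast, div_pow, inv_div]
    push_cast
    ring
  · rw [if_neg (Int.not_even_iff_odd.mpr hn), if_neg (Int.not_even_iff_odd.mpr hi),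
      if_pos (Int.even_sub.mpr (by simp [Int.not_even_iff_odd.mpr hn,
        Int.not_even_iff_odd.mpr hi])), zpow_natCast, div_pow]
    push_cast
    ring

end FactorTensor

theorem prod_zpow_sum {α : Type*} (s : Finset α) {P : ℚ} (hP : P ≠ 0) (e : α → ℤ) :
    ∏ j ∈ s, P ^ e j = P ^ (∑ j ∈ s, e j) := by
  classical
  induction s using Finset.induction with
  | empty => simp
  | insert a s' hj ih =>
                    rw [Finset.prod_insert hj, Finset.sum_insert hj, zpow_add₀ hP, ih]

section PerDegree
variable {A B C : ℤ → Type} [∀ i, AddCommGroup (A i)] [∀ i, AddCommGroup (B i)]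
  [∀ i, AddCommGroup (C i)]

theorem chiTor_graded (f : ∀ i, A i →ₗ[ℤ] B i) (N : ℕ)
    (hC : ∀ j : ℤ, N < j.natAbs → Subsingleton (C j)) (n : ℤ) :
    chiTorFactor (gradedTensorMap (C := C) f n) n =
      ∏ j ∈ Finset.Icc (-(N : ℤ)) N,
        chiTorFactor (TensorProduct.map (f (n - j)) (LinearMap.id (M := C j))) n := by
  have hsub : ∀ j : ℤ, j ∉ Finset.Icc (-(N : ℤ)) N → N < j.natAbs := by
    intro j hj
    rw [Finset.mem_Icc] at hj
    omega
  have hM : ∀ j : ℤ, j ∉ Finset.Icc (-(N : ℤ)) N →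
      Subsingleton (TensorProduct ℤ (A (n - j)) (C j)) :=
    fun j hj => tensor_subsingleton _ _ (hC j (hsub j hj))
  have hN : ∀ j : ℤ, j ∉ Finset.Icc (-(N : ℤ)) N →
      Subsingleton (TensorProduct ℤ (B (n - j)) (C j)) :=
    fun j hj => tensor_subsingleton _ _ (hC j (hsub j hj))
  have hker := card_ker_mapRange (Finset.Icc (-(N : ℤ)) N)
    (fun j => TensorProduct.map (f (n - j)) (LinearMap.id (M := C j))) hM hN
  have hcoker := card_coker_mapRange (Finset.Icc (-(N : ℤ)) N)
    (fun j => TensorProduct.map (f (n - j)) (LinearMap.id (M := C j))) hM hN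
  have hker' : Nat.card (LinearMap.ker (gradedTensorMap (C := C) f n)) =
      ∏ j ∈ Finset.Icc (-(N : ℤ)) N,
        Nat.card (LinearMap.ker (TensorProduct.map (f (n - j)) (LinearMap.id (M := C j)))) :=
    hker
  have hcoker' : Nat.card ((⨁ j : ℤ, TensorProduct ℤ (B (n - j)) (C j)) ⧸
      LinearMap.range (gradedTensorMap (C := C) f n)) =
      ∏ j ∈ Finset.Icc (-(N : ℤ)) N,
        Nat.card (TensorProduct ℤ (B (n - j)) (C j) ⧸
          LinearMap.range (TensorProduct.map (f (n - j)) (LinearMap.id (M := C j)))) :=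
    hcoker
  by_cases hn : Even n
  · simp only [chiTorFactor, if_pos hn]
    rw [hker', hcoker']
    push_cast
    rw [Finset.prod_div_distrib]
  · simp only [chiTorFactor, if_neg hn]
    rw [hker', hcoker']
    push_cast
    rw [Finset.prod_div_distrib]

end PerDegree


/-- if `A_*, B_*, C_*` are graded abelian groups with `C_*` finitely
generated free, and `f_* : A_* → B_*` is a graded map which is a rational isomorphism
with finite kernel and cokernel in each degree (all graded pieces being trivial outside
a finite window), then `χ^tor(f_* ⊗ id_{C_*}) = χ^tor(f_*)^{χ(C_*)}`, where
`χ^tor(f_*) = ∏ᵢ (|coker f_i|/|ker f_i|)^{(-1)^i}` and `χ(C_*) = Σⱼ (-1)^j rank C_j`. -/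
theorem chi_tor_tensor_free (A B C : ℤ → Type) [∀ i, AddCommGroup (A i)]
    [∀ i, AddCommGroup (B i)] [∀ i, AddCommGroup (C i)]
    [∀ j, Module.Free ℤ (C j)] [∀ j, Module.Finite ℤ (C j)]
    (f : ∀ i, A i →ₗ[ℤ] B i)
    (hker : ∀ i, Finite (LinearMap.ker (f i)))
    (hcoker : ∀ i, Finite (B i ⧸ LinearMap.range (f i)))
    (N : ℕ)
    (hA : ∀ i : ℤ, N < i.natAbs → Subsingleton (A i))
    (hB : ∀ i : ℤ, N < i.natAbs → Subsingleton (B i))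
    (hC : ∀ j : ℤ, N < j.natAbs → Subsingleton (C j)) :
    (∏ n ∈ Finset.Icc (-(2 * N : ℤ)) (2 * N),
        chiTorFactor (gradedTensorMap (C := C) f n) n) =
      (∏ i ∈ Finset.Icc (-(N : ℤ)) N, chiTorFactor (f i) i) ^
        (∑ j ∈ Finset.Icc (-(N : ℤ)) N,
          (if Even j then (Module.finrank ℤ (C j) : ℤ) else -(Module.finrank ℤ (C j)))) := by
  classical
  have hPne : (∏ i ∈ Finset.Icc (-(N : ℤ)) N, chiTorFactor (f i) i) ≠ 0 :=
    ne_of_gt (Finset.prod_pos fun i _ => chiTorFactor_pos (f i) (hker i) (hcoker i) i)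
  have hstep1 : ∀ n ∈ Finset.Icc (-(2 * N : ℤ)) (2 * N),
      chiTorFactor (gradedTensorMap (C := C) f n) n =
        ∏ j ∈ Finset.Icc (-(N : ℤ)) N, chiTorFactor (f (n - j)) (n - j) ^
          (if Even j then (Module.finrank ℤ (C j) : ℤ) else -(Module.finrank ℤ (C j))) := by
    intro n _
    rw [chiTor_graded f N hC n]
    refine Finset.prod_congr rfl fun j _ => ?_
    rw [chiTorFactor_tensor (f (n - j)) n (n - j), sub_sub_cancel]
  rw [Finset.prod_congr rfl hstep1, Finset.prod_comm]
  have hinner : ∀ j ∈ Finset.Icc (-(N : ℤ)) N,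
      (∏ n ∈ Finset.Icc (-(2 * N : ℤ)) (2 * N), chiTorFactor (f (n - j)) (n - j) ^
          (if Even j then (Module.finrank ℤ (C j) : ℤ) else -(Module.finrank ℤ (C j)))) =
        (∏ i ∈ Finset.Icc (-(N : ℤ)) N, chiTorFactor (f i) i) ^
          (if Even j then (Module.finrank ℤ (C j) : ℤ) else -(Module.finrank ℤ (C j))) := by
    intro j hj
    rw [Finset.mem_Icc] at hj
    rw [Finset.prod_zpow]
    congr 1
    have h1 : (∏ n ∈ Finset.Icc (-(2 * N : ℤ)) (2 * N), chiTorFactor (f (n - j)) (n - j)) =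
        ∏ i ∈ Finset.Icc (-(2 * N : ℤ) - j) (2 * N - j), chiTorFactor (f i) i := by
      refine Finset.prod_nbij' (fun n => n - j) (fun i => i + j) ?_ ?_ ?_ ?_ ?_
      · intro a ha
        rw [Finset.mem_Icc] at ha ⊢
        omega
      · intro a ha
        rw [Finset.mem_Icc] at ha ⊢
        omega
      · intro a _
        omega
      · intro a _
        omega
      · intro a _
        rfl
    rw [h1]
    refine (Finset.prod_subset ?_ ?_).symm
    · intro i hi
      rw [Finset.mem_Icc] at hi ⊢
      omega
    · intro i hi hni
      rw [Finset.mem_Icc] at hi hni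
      have habs : N < i.natAbs := by omega
      exact chiTorFactor_triv (f i) (hA i habs) (hB i habs) i
  rw [Finset.prod_congr rfl hinner, prod_zpow_sum _ hPne]
end
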